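/- arXiv:math/0401305 — 5 statements merged into one kernel-verified Lean document; each statement's English description precedes it below -/
import Mathlib

section
/- Let Ω be an infinite set, G a subgroup of Sym(Ω), and Γ ⊆ Ω a subset such that |Ω|^{|Γ|} ≤ |Ω| (for example, any finite subset Γ). Then G_(Γ) ≈_{|Ω|⁺} G, where |Ω|⁺ denotes the successor cardinal of |Ω|. -/
open scoped Cardinal ENNReal

universe u

variable {Ω : Type u}

/-- The pointwise stabilizer of a set `s` inside a subgroup `G` of `Sym(Ω)`. -/
def pstab (G : Subgroup (Equiv.Perm Ω)) (s : Set Ω) : Subgroup (Equiv.Perm Ω) where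
  carrier := {g | g ∈ G ∧ ∀ x ∈ s, g x = x}
  one_mem' := ⟨G.one_mem, fun _ _ => rfl⟩
  mul_mem' := by
    rintro a b ⟨haG, ha⟩ ⟨hbG, hb⟩
    refine ⟨G.mul_mem haG hbG, fun x hx => ?_⟩
    simp [Equiv.Perm.mul_apply, hb x hx, ha x hx]
  inv_mem' := by
    rintro a ⟨haG, ha⟩
    refine ⟨G.inv_mem haG, fun x hx => ?_⟩
    conv_lhs => rw [← ha x hx]
    exact Equiv.symm_apply_apply a x

/-- For a family `A` of subsets of `Ω`, the subgroup of permutations carrying each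
member of `A` onto itself. -/
def SAgrp (A : Set (Set Ω)) : Subgroup (Equiv.Perm Ω) where
  carrier := {f | ∀ s ∈ A, (f : Ω → Ω) '' s = s}
  one_mem' := fun s _ => by simp
  mul_mem' := by
    intro a b ha hb s hs
    rw [Equiv.Perm.coe_mul, Set.image_comp, hb s hs, ha s hs]
  inv_mem' := by
    intro a ha s hs
    conv_lhs => rw [← ha s hs]
    rw [← Set.image_comp]
    simp

/-- `G₁ ≼_κ G₂` : there is a set `U` of permutations of cardinality `< κ` with
`G₁ ≤ ⟨G₂ ∪ U⟩`. -/
def Prec (κ : Cardinal.{u}) (G₁ G₂ : Subgroup (Equiv.Perm Ω)) : Prop :=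
  ∃ U : Set (Equiv.Perm Ω), #U < κ ∧
    G₁ ≤ Subgroup.closure ((G₂ : Set (Equiv.Perm Ω)) ∪ U)

/-- `G₁ ≈_κ G₂`. -/
def CApprox (κ : Cardinal.{u}) (G₁ G₂ : Subgroup (Equiv.Perm Ω)) : Prop :=
  Prec κ G₁ G₂ ∧ Prec κ G₂ G₁

/-- `G₁ ≼ G₂` (i.e. `≼_{ℵ₀}`, with `U` finite). -/
def PrecF (G₁ G₂ : Subgroup (Equiv.Perm Ω)) : Prop :=
  ∃ U : Set (Equiv.Perm Ω), U.Finite ∧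
    G₁ ≤ Subgroup.closure ((G₂ : Set (Equiv.Perm Ω)) ∪ U)

/-- `G₁ ≈ G₂` (i.e. `≈_{ℵ₀}`). -/
def ApproxF (G₁ G₂ : Subgroup (Equiv.Perm Ω)) : Prop :=
  PrecF G₁ G₂ ∧ PrecF G₂ G₁

/-- A generalized metric: a `[0,∞]`-valued metric. -/
structure IsGenMetric (d : Ω → Ω → ℝ≥0∞) : Prop where
  eq_zero_iff : ∀ α β, d α β = 0 ↔ α = β
  symm : ∀ α β, d α β = d β α
  triangle : ∀ α β γ, d α γ ≤ d α β + d β γ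

/-- Open ball for a generalized metric. -/
def gball (d : Ω → Ω → ℝ≥0∞) (α : Ω) (r : ℝ≥0∞) : Set Ω := {β | d α β < r}

/-- `(Ω, d)` is `κ`-uncrowded: every ball of finite radius has `< κ` elements. -/
def Uncrowded (κ : Cardinal.{u}) (d : Ω → Ω → ℝ≥0∞) : Prop :=
  ∀ (α : Ω) (r : ℝ≥0∞), r < ⊤ → #(gball d α r) < κ

/-- `(Ω, d)` is uniformly `κ`-uncrowded. -/
def UnifUncrowded (κ : Cardinal.{u}) (d : Ω → Ω → ℝ≥0∞) : Prop :=
  ∀ r : ℝ≥0∞, r < ⊤ → ∃ lam : Cardinal.{u}, lam < κ ∧ ∀ α : Ω, #(gball d α r) ≤ lam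

/-- `g` is bounded with respect to `d` : `‖g‖_d = ⨆ α, d α (αg) < ∞`. -/
def BoundedPerm (d : Ω → Ω → ℝ≥0∞) (g : Equiv.Perm Ω) : Prop :=
  (⨆ α : Ω, d α (g α)) < ⊤

/-- The function topology on `Sym(Ω)`: induced from the product topology on `Ω → Ω`
with `Ω` discrete. -/
def permTop (Ω : Type u) : TopologicalSpace (Equiv.Perm Ω) :=
  TopologicalSpace.induced (fun g : Equiv.Perm Ω => (g : Ω → Ω))
    (@Pi.topologicalSpace Ω (fun _ => Ω) (fun _ => ⊥))

/-- `G` is closed in `Sym(Ω)` in the function topology. -/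
def FTClosed (G : Subgroup (Equiv.Perm Ω)) : Prop :=
  @IsClosed _ (permTop Ω) (G : Set (Equiv.Perm Ω))

/-- `G` is discrete in the function topology. -/
def FTDiscrete (G : Subgroup (Equiv.Perm Ω)) : Prop :=
  @DiscreteTopology G
    (TopologicalSpace.induced (fun x : G => (x : Equiv.Perm Ω)) (permTop Ω))

/-- The orbit of `α` under a subgroup `H ≤ Sym(Ω)`. -/
def orb (H : Subgroup (Equiv.Perm Ω)) (α : Ω) : Set Ω := {β | ∃ g ∈ H, g α = β}

/-- A partition of `Ω`: a set of disjoint nonempty subsets with union `Ω`. -/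
def IsPartition (A : Set (Set Ω)) : Prop :=
  (∀ s ∈ A, s.Nonempty) ∧ A.PairwiseDisjoint id ∧ ⋃₀ A = Set.univ

/-- `A ∈ 𝒫`: a partition of `Ω` into finite subsets of unbounded cardinality. -/
def MemP (A : Set (Set Ω)) : Prop :=
  IsPartition A ∧ (∀ s ∈ A, s.Finite) ∧ ∀ n : ℕ, ∃ s ∈ A, (n : ℕ∞) < s.encard

/-- `A ∈ 𝒬`: a partition of `Ω` with a common finite bound on the cardinalities of
its members, infinitely many of which have more than one element. -/
def MemQ (A : Set (Set Ω)) : Prop :=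
  IsPartition A ∧ (∃ n : ℕ, ∀ s ∈ A, s.encard ≤ (n : ℕ∞)) ∧
    {s | s ∈ A ∧ 1 < s.encard}.Infinite

/-- The subgroup `FN(Ω,d)` of permutations of finite norm with respect to a
generalized metric `d`. -/
def FN (d : Ω → Ω → ℝ≥0∞) (hd : IsGenMetric d) : Subgroup (Equiv.Perm Ω) where
  carrier := {g | (⨆ α : Ω, d α (g α)) < ⊤}
  one_mem' := by
    have h : (⨆ α : Ω, d α ((1 : Equiv.Perm Ω) α)) ≤ 0 :=
      iSup_le fun α => le_of_eq ((hd.eq_zero_iff α ((1 : Equiv.Perm Ω) α)).2 rfl)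
    exact lt_of_le_of_lt h (by simp)
  mul_mem' := by
    intro a b ha hb
    have h : (⨆ α : Ω, d α ((a * b) α)) ≤
        (⨆ α : Ω, d α (b α)) + (⨆ α : Ω, d α (a α)) := by
      refine iSup_le fun α => ?_
      calc d α ((a * b) α) = d α (a (b α)) := by rw [Equiv.Perm.mul_apply]
        _ ≤ d α (b α) + d (b α) (a (b α)) := hd.triangle _ _ _
        _ ≤ _ := add_le_add (le_iSup (fun α : Ω => d α (b α)) α)
              (le_iSup (fun β : Ω => d β (a β)) (b α))
    exact lt_of_le_of_lt h (ENNReal.add_lt_top.2 ⟨hb, ha⟩)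
  inv_mem' := by
    intro a ha
    have h : (⨆ α : Ω, d α (a⁻¹ α)) ≤ ⨆ β : Ω, d β (a β) := by
      refine iSup_le fun α => ?_
      have e : d α (a⁻¹ α) = d (a⁻¹ α) (a (a⁻¹ α)) := by
        rw [show a (a⁻¹ α) = α from Equiv.apply_symm_apply a α]; exact hd.symm _ _
      rw [e]
      exact le_iSup (fun β : Ω => d β (a β)) (a⁻¹ α)
    exact lt_of_le_of_lt h ha

/-- Lemma 2.2: for `Γ ⊆ Ω` with `|Ω|^{|Γ|} ≤ |Ω|`, the pointwise
stabilizer `G_(Γ)` satisfies `G_(Γ) ≈_{|Ω|⁺} G`. -/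
theorem stmt0 {Ω : Type u} [Infinite Ω] (G : Subgroup (Equiv.Perm Ω)) (Γ : Set Ω)
    (hΓ : (#Ω) ^ (#Γ) ≤ #Ω) :
    CApprox (Order.succ (#Ω)) (pstab G Γ) G := by
  classical
  constructor
  · refine ⟨∅, ?_, ?_⟩
    · simp only [Cardinal.mk_eq_zero]; exact lt_of_le_of_lt (Cardinal.zero_le _) (Order.lt_succ (#Ω))
    · intro g hg
      exact Subgroup.subset_closure (Or.inl hg.1)
  · let r : G → (Γ → Ω) := fun g x => (g : Equiv.Perm Ω) (x : Ω)
    let s : (Γ → Ω) → Equiv.Perm Ω := fun f =>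
      if h : ∃ g : G, r g = f then ((Classical.choose h : G) : Equiv.Perm Ω) else 1
    refine ⟨s '' Set.range r, ?_, ?_⟩
    · calc #(s '' Set.range r) ≤ #(Set.range r) := Cardinal.mk_image_le
        _ ≤ #(Γ → Ω) := Cardinal.mk_set_le _
        _ = (#Ω) ^ (#Γ) := (Cardinal.power_def Ω Γ).symm
        _ ≤ #Ω := hΓ
        _ < _ := Order.lt_succ _
    · intro g hg
      have hex : ∃ g' : G, r g' = r ⟨g, hg⟩ := ⟨⟨g, hg⟩, rfl⟩
      set u : Equiv.Perm Ω := s (r ⟨g, hg⟩) with hu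
      have hus : u = ((Classical.choose hex : G) : Equiv.Perm Ω) := by
        rw [hu]; simp only [s, dif_pos hex]
      have huG : u ∈ G := by rw [hus]; exact (Classical.choose hex).2
      have hur : ∀ x : Γ, u (x : Ω) = g (x : Ω) := by
        intro x
        have h := Classical.choose_spec hex
        rw [hus]
        exact congrFun h x
      have hmem : u⁻¹ * g ∈ pstab G Γ := by
        refine ⟨G.mul_mem (G.inv_mem huG) hg, fun x hx => ?_⟩
        rw [Equiv.Perm.mul_apply, ← hur ⟨x, hx⟩, Equiv.Perm.inv_def, Equiv.symm_apply_apply]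
      have h1 : u ∈ Subgroup.closure (((pstab G Γ) : Set (Equiv.Perm Ω)) ∪ s '' Set.range r) :=
        Subgroup.subset_closure (Or.inr ⟨r ⟨g, hg⟩, ⟨⟨g, hg⟩, rfl⟩, rfl⟩)
      have h2 : u⁻¹ * g ∈ Subgroup.closure (((pstab G Γ) : Set (Equiv.Perm Ω)) ∪ s '' Set.range r) :=
        Subgroup.subset_closure (Or.inl hmem)
      simpa using mul_mem h1 h2
end

section
/- Suppose Ω is an infinite set, κ a regular cardinal ≤ |Ω|, d a κ-uncrowded (respectively, uniformly κ-uncrowded) generalized metric on Ω, and G a subgroup of Sym(Ω) all of whose elements are bounded with respect to d. Then for any subset U ⊆ Sym(Ω) of cardinality < κ there exists a generalized metric d′ on Ω with d′(α,β) ≤ d(α,β) for all α,β ∈ Ω, again κ-uncrowded (respectively, uniformly κ-uncrowded), such that every element of U, and hence every element of ⟨G ∪ U⟩, is bounded with respect to d′. -/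
open scoped Cardinal ENNReal

universe u

variable {Ω : Type u}

section AuxStmt1

open Classical in
/-- Jump cost: 1 if some element of `S` carries `x` to `y`, else `∞`. -/
noncomputable def jmp (S : Set (Equiv.Perm Ω)) (x y : Ω) : ℝ≥0∞ :=
  if ∃ g ∈ S, g x = y then 1 else ⊤

/-- Step cost. -/
noncomputable def stepc (d : Ω → Ω → ℝ≥0∞) (S : Set (Equiv.Perm Ω)) (x y : Ω) : ℝ≥0∞ :=
  min (d x y) (jmp S x y)

/-- Cost of a chain. -/
noncomputable def chainCost (c : Ω → Ω → ℝ≥0∞) : Ω → List Ω → Ω → ℝ≥0∞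
  | α, [], β => c α β
  | α, γ :: l, β => c α γ + chainCost c γ l β

/-- The modified metric. -/
noncomputable def dPrime (d : Ω → Ω → ℝ≥0∞) (S : Set (Equiv.Perm Ω)) (α β : Ω) : ℝ≥0∞ :=
  ⨅ l : List Ω, chainCost (stepc d S) α l β

/-- Points reachable from `σ` by `n` jumps separated by `d`-moves of length `< r`. -/
def Reach (d : Ω → Ω → ℝ≥0∞) (S : Set (Equiv.Perm Ω)) (r : ℝ≥0∞) (σ : Ω) : ℕ → Set Ω
  | 0 => gball d σ r
  | n + 1 => Reach d S r σ n ∪ ⋃ β ∈ Reach d S r σ n, ⋃ g ∈ S, gball d ((g : Equiv.Perm Ω) β) r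

variable {d : Ω → Ω → ℝ≥0∞} {S : Set (Equiv.Perm Ω)} {r : ℝ≥0∞}

lemma one_le_jmp (S : Set (Equiv.Perm Ω)) (x y : Ω) : 1 ≤ jmp S x y := by
  by_cases h : ∃ g ∈ S, g x = y <;> simp [jmp, h]

lemma jmp_symm (hS : ∀ g ∈ S, g⁻¹ ∈ S) (x y : Ω) : jmp S x y = jmp S y x := by
  classical
  have hiff : (∃ g ∈ S, g x = y) ↔ (∃ g ∈ S, g y = x) := by
    constructor
    · rintro ⟨g, hg, rfl⟩
      exact ⟨g⁻¹, hS g hg, Equiv.symm_apply_apply g x⟩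
    · rintro ⟨g, hg, rfl⟩
      exact ⟨g⁻¹, hS g hg, Equiv.symm_apply_apply g y⟩
  simp only [jmp]
  exact if_congr hiff rfl rfl

lemma stepc_symm (hd : IsGenMetric d) (hS : ∀ g ∈ S, g⁻¹ ∈ S) (x y : Ω) :
    stepc d S x y = stepc d S y x := by
  unfold stepc; rw [hd.symm x y, jmp_symm hS]

lemma min_one_le_stepc (x y : Ω) : min (d x y) 1 ≤ stepc d S x y :=
  le_min (min_le_left _ _) ((min_le_right _ _).trans (one_le_jmp S x y))

lemma trunc_tri (hd : IsGenMetric d) (a b c' : Ω) :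
    min (d a b) 1 ≤ min (d a c') 1 + min (d c' b) 1 := by
  rcases le_total 1 (d a c') with h | h
  · calc min (d a b) 1 ≤ 1 := min_le_right _ _
      _ ≤ min (d a c') 1 + min (d c' b) 1 := by
          rw [min_eq_right h]; exact le_self_add
  rcases le_total 1 (d c' b) with h' | h'
  · calc min (d a b) 1 ≤ 1 := min_le_right _ _
      _ ≤ min (d a c') 1 + min (d c' b) 1 := by
          rw [min_eq_right h']; exact le_add_self
  · rw [min_eq_left h, min_eq_left h']
    exact (min_le_left _ _).trans (hd.triangle a c' b)

lemma min_one_le_chainCost (hd : IsGenMetric d) :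
    ∀ (l : List Ω) (α β : Ω), min (d α β) 1 ≤ chainCost (stepc d S) α l β := by
  intro l
  induction l with
  | nil => intro α β; exact min_one_le_stepc α β
  | cons γ l ih =>
      intro α β
      calc min (d α β) 1 ≤ min (d α γ) 1 + min (d γ β) 1 := trunc_tri hd α β γ
        _ ≤ stepc d S α γ + chainCost (stepc d S) γ l β :=
            add_le_add (min_one_le_stepc α γ) (ih γ β)

lemma chainCost_append (c : Ω → Ω → ℝ≥0∞) :
    ∀ (l₁ : List Ω) (α m β : Ω) (l₂ : List Ω),
      chainCost c α (l₁ ++ m :: l₂) β = chainCost c α l₁ m + chainCost c m l₂ β := by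
  intro l₁
  induction l₁ with
  | nil => intro α m β l₂; rfl
  | cons γ l ih =>
      intro α m β l₂
      show c α γ + chainCost c γ (l ++ m :: l₂) β = _
      rw [ih, ← add_assoc]; rfl

lemma chainCost_reverse {c : Ω → Ω → ℝ≥0∞} (hc : ∀ x y, c x y = c y x) :
    ∀ (l : List Ω) (α β : Ω), chainCost c α l β = chainCost c β l.reverse α := by
  intro l
  induction l with
  | nil => intro α β; exact hc α β
  | cons γ l ih =>
      intro α β
      show c α γ + chainCost c γ l β = _
      rw [List.reverse_cons, chainCost_append c l.reverse β γ α []]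
      rw [← ih γ β]
      show _ = chainCost c γ l β + c γ α
      rw [hc α γ, add_comm]

lemma dPrime_le (α β : Ω) : dPrime d S α β ≤ d α β :=
  iInf_le_of_le [] (min_le_left _ _)

lemma min_one_le_dPrime (hd : IsGenMetric d) (α β : Ω) :
    min (d α β) 1 ≤ dPrime d S α β :=
  le_iInf fun l => min_one_le_chainCost hd l α β

lemma dPrime_isGenMetric (hd : IsGenMetric d) (hS : ∀ g ∈ S, g⁻¹ ∈ S) :
    IsGenMetric (dPrime d S) := by
  constructor
  · intro α β
    constructor
    · intro h
      by_contra hne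
      have hdpos : 0 < d α β := by
        rcases eq_or_ne (d α β) 0 with h0 | h0
        · exact absurd ((hd.eq_zero_iff α β).1 h0) hne
        · exact pos_iff_ne_zero.2 h0
      have : (0 : ℝ≥0∞) < min (d α β) 1 := lt_min hdpos zero_lt_one
      have h2 := min_one_le_dPrime (S := S) hd α β
      rw [h] at h2
      exact absurd (le_antisymm h2 (by simp)) (ne_of_gt this)
    · rintro rfl
      refine le_antisymm ?_ (by simp)
      calc dPrime d S α α ≤ d α α := dPrime_le α α
        _ = 0 := (hd.eq_zero_iff α α).2 rfl
  · intro α β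
    have key : ∀ x y : Ω, dPrime d S x y ≤ dPrime d S y x := by
      intro x y
      refine le_iInf fun l => iInf_le_of_le l.reverse ?_
      rw [← chainCost_reverse (stepc_symm hd hS) l y x]
    exact le_antisymm (key α β) (key β α)
  · intro α β γ
    unfold dPrime
    rw [ENNReal.iInf_add]
    refine le_iInf fun l₁ => ?_
    rw [ENNReal.add_iInf]
    refine le_iInf fun l₂ => ?_
    exact iInf_le_of_le (l₁ ++ β :: l₂) (le_of_eq (chainCost_append _ l₁ α β γ l₂))

lemma reach_succ_left (σ : Ω) (n : ℕ) : Reach d S r σ n ⊆ Reach d S r σ (n + 1) :=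
  Set.subset_union_left

lemma reach_mono (σ : Ω) {n m : ℕ} (h : n ≤ m) : Reach d S r σ n ⊆ Reach d S r σ m := by
  induction m with
  | zero => simpa [Nat.le_zero.1 h] using subset_rfl
  | succ m ih =>
      rcases Nat.lt_or_ge n (m + 1) with h' | h'
      · exact (ih (Nat.lt_succ_iff.1 h')).trans (reach_succ_left σ m)
      · have : n = m + 1 := le_antisymm h h'
        rw [this]

lemma reach_ball_subset {σ α : Ω} {g : Equiv.Perm Ω} {n : ℕ}
    (hα : α ∈ Reach d S r σ n) (hg : g ∈ S) :
    gball d (g α) r ⊆ Reach d S r σ (n + 1) := by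
  intro x hx
  exact Or.inr (Set.mem_biUnion hα (Set.mem_biUnion hg hx))

lemma reach_shift {σ α : Ω} {g : Equiv.Perm Ω} (hα : α ∈ Reach d S r σ 0) (hg : g ∈ S) :
    ∀ n : ℕ, Reach d S r (g α) n ⊆ Reach d S r σ (n + 1) := by
  intro n
  induction n with
  | zero => exact reach_ball_subset hα hg
  | succ n ih =>
      rintro x (hx | hx)
      · exact reach_succ_left σ (n + 1) (ih hx)
      · simp only [Set.mem_iUnion] at hx
        obtain ⟨β, hβ, h, hh, hx⟩ := hx
        exact reach_ball_subset (ih hβ) hh hx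

lemma reach_of_chain (hd : IsGenMetric d) :
    ∀ (l : List Ω) (σ α β : Ω) (t : ℝ≥0∞), d σ α ≤ t →
      t + chainCost (stepc d S) α l β < r →
      ∃ n : ℕ, (n : ℝ≥0∞) ≤ chainCost (stepc d S) α l β ∧ β ∈ Reach d S r σ n := by
  intro l
  induction l with
  | nil =>
      intro σ α β t hσ hlt
      have hcost : stepc d S α β < r := lt_of_le_of_lt le_add_self hlt
      rcases le_total (d α β) (jmp S α β) with h | h
      · have hc : stepc d S α β = d α β := min_eq_left h
        refine ⟨0, by simp, ?_⟩
        show β ∈ gball d σ r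
        have : d σ β ≤ t + stepc d S α β := by
          rw [hc]; exact (hd.triangle σ α β).trans (add_le_add_left hσ _)
        exact lt_of_le_of_lt this hlt
      · have hc : stepc d S α β = jmp S α β := min_eq_right h
        have hex : ∃ g ∈ S, g α = β := by
          by_contra hcon
          rw [hc] at hcost
          unfold jmp at hcost
          rw [if_neg hcon] at hcost
          exact not_top_lt hcost
        obtain ⟨g, hg, hgα⟩ := hex
        have hj : jmp S α β = 1 := by unfold jmp; rw [if_pos ⟨g, hg, hgα⟩]
        have ht : t < r := lt_of_le_of_lt le_self_add hlt
        have hα0 : α ∈ Reach d S r σ 0 := lt_of_le_of_lt hσ ht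
        have hrpos : (0 : ℝ≥0∞) < r := by
          rw [hc, hj] at hcost; exact zero_lt_one.trans hcost
        have hβ : β ∈ gball d (g α) r := by
          show d (g α) β < r
          rw [hgα, (hd.eq_zero_iff β β).2 rfl]
          exact hrpos
        refine ⟨1, ?_, reach_ball_subset hα0 hg hβ⟩
        show ((1 : ℕ) : ℝ≥0∞) ≤ stepc d S α β
        rw [hc, hj, Nat.cast_one]
  | cons γ l ih =>
      intro σ α β t hσ hlt
      have hexp : chainCost (stepc d S) α (γ :: l) β
          = stepc d S α γ + chainCost (stepc d S) γ l β := rfl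
      rcases le_total (d α γ) (jmp S α γ) with h | h
      · have hc : stepc d S α γ = d α γ := min_eq_left h
        have hσ' : d σ γ ≤ t + d α γ := (hd.triangle σ α γ).trans (add_le_add_left hσ _)
        have hlt' : (t + d α γ) + chainCost (stepc d S) γ l β < r := by
          rw [add_assoc, ← hc, ← hexp]; exact hlt
        obtain ⟨n, hn, hmem⟩ := ih σ γ β (t + d α γ) hσ' hlt'
        exact ⟨n, by rw [hexp]; exact hn.trans le_add_self, hmem⟩
      · have hc : stepc d S α γ = jmp S α γ := min_eq_right h
        have hcost : stepc d S α γ < r :=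
          lt_of_le_of_lt le_self_add (lt_of_le_of_lt le_add_self (hexp ▸ hlt))
        have hex : ∃ g ∈ S, g α = γ := by
          by_contra hcon
          rw [hc] at hcost
          unfold jmp at hcost
          rw [if_neg hcon] at hcost
          exact not_top_lt hcost
        obtain ⟨g, hg, hgα⟩ := hex
        have hj : stepc d S α γ = 1 := by rw [hc]; unfold jmp; rw [if_pos ⟨g, hg, hgα⟩]
        have ht : t < r := lt_of_le_of_lt le_self_add hlt
        have hα0 : α ∈ Reach d S r σ 0 := lt_of_le_of_lt hσ ht
        obtain ⟨n, hn, hmem⟩ := ih γ γ β 0 (le_of_eq ((hd.eq_zero_iff γ γ).2 rfl)) (by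
          rw [zero_add]
          calc chainCost (stepc d S) γ l β ≤ stepc d S α γ + chainCost (stepc d S) γ l β :=
                le_add_self
            _ = chainCost (stepc d S) α (γ :: l) β := hexp.symm
            _ ≤ t + chainCost (stepc d S) α (γ :: l) β := le_add_self
            _ < r := hlt)
        rw [← hgα] at hmem
        refine ⟨n + 1, ?_, reach_shift hα0 hg n hmem⟩
        rw [hexp, hj]
        push_cast
        rw [add_comm]
        exact add_le_add_right hn 1

lemma gball_dPrime_subset_reach (hd : IsGenMetric d) {n₀ : ℕ} (hr : r ≤ (n₀ : ℝ≥0∞)) (α : Ω) :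
    gball (dPrime d S) α r ⊆ Reach d S r α n₀ := by
  intro β hβ
  have : dPrime d S α β < r := hβ
  obtain ⟨l, hl⟩ := iInf_lt_iff.1 this
  obtain ⟨n, hn, hmem⟩ := reach_of_chain hd l α α β 0
    (le_of_eq ((hd.eq_zero_iff α α).2 rfl)) (by rwa [zero_add])
  have hnn : n ≤ n₀ := by
    have : (n : ℝ≥0∞) < (n₀ : ℝ≥0∞) := lt_of_le_of_lt hn (lt_of_lt_of_le hl hr)
    exact (Nat.cast_lt.1 this).le
  exact reach_mono α hnn hmem

lemma reach_card_lt {κ : Cardinal.{u}} (hreg : κ.IsRegular) (hun : Uncrowded κ d)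
    (hS : #S < κ) (hr : r < ⊤) : ∀ (n : ℕ) (α : Ω), #(Reach d S r α n) < κ := by
  intro n
  induction n with
  | zero => intro α; exact hun α r hr
  | succ n ih =>
      intro α
      refine lt_of_le_of_lt (Cardinal.mk_union_le _ _) ?_
      refine Cardinal.add_lt_of_lt hreg.aleph0_le (ih α) ?_
      refine lt_of_le_of_lt (Cardinal.mk_biUnion_le _ _) ?_
      refine Cardinal.mul_lt_of_lt hreg.aleph0_le (ih α) ?_
      refine Cardinal.iSup_lt_of_isRegular hreg (ih α) ?_
      intro β
      refine lt_of_le_of_lt (Cardinal.mk_biUnion_le _ _) ?_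
      refine Cardinal.mul_lt_of_lt hreg.aleph0_le hS ?_
      exact Cardinal.iSup_lt_of_isRegular hreg hS fun g => hun _ r hr

noncomputable def muFun (lam : Cardinal.{u}) : ℕ → Cardinal.{u}
  | 0 => lam
  | n + 1 => muFun lam n + muFun lam n * (lam * lam)

lemma muFun_lt {κ lam : Cardinal.{u}} (hreg : κ.IsRegular) (hlam : lam < κ) :
    ∀ n : ℕ, muFun lam n < κ := by
  intro n
  induction n with
  | zero => exact hlam
  | succ n ih =>
      exact Cardinal.add_lt_of_lt hreg.aleph0_le ih
        (Cardinal.mul_lt_of_lt hreg.aleph0_le ih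
          (Cardinal.mul_lt_of_lt hreg.aleph0_le hlam hlam))

lemma reach_card_le {lam : Cardinal.{u}}
    (hlam : ∀ α : Ω, #(gball d α r) ≤ lam) (hSlam : #S ≤ lam) :
    ∀ (n : ℕ) (α : Ω), #(Reach d S r α n) ≤ muFun lam n := by
  intro n
  induction n with
  | zero => intro α; exact hlam α
  | succ n ih =>
      intro α
      refine le_trans (Cardinal.mk_union_le _ _) (add_le_add (ih α) ?_)
      refine le_trans (Cardinal.mk_biUnion_le _ _) (mul_le_mul' (ih α) ?_)
      refine ciSup_le' fun β => ?_
      refine le_trans (Cardinal.mk_biUnion_le _ _) ?_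
      exact mul_le_mul' hSlam (ciSup_le' fun g => hlam _)

lemma jmp_eq_one {g : Equiv.Perm Ω} (hg : g ∈ S) (α : Ω) : jmp S α (g α) = 1 := by
  classical
  unfold jmp
  exact if_pos ⟨g, hg, rfl⟩

end AuxStmt1

/-- Theorem 3.2. -/
theorem stmt1 {Ω : Type u} [Infinite Ω] (κ : Cardinal.{u}) (hreg : κ.IsRegular)
    (hκ : κ ≤ #Ω) (d : Ω → Ω → ℝ≥0∞) (hd : IsGenMetric d) (hun : Uncrowded κ d)
    (G : Subgroup (Equiv.Perm Ω)) (hG : ∀ g ∈ G, BoundedPerm d g)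
    (U : Set (Equiv.Perm Ω)) (hU : #U < κ) :
    ∃ d' : Ω → Ω → ℝ≥0∞, IsGenMetric d' ∧ (∀ α β, d' α β ≤ d α β) ∧
      Uncrowded κ d' ∧ (UnifUncrowded κ d → UnifUncrowded κ d') ∧
      (∀ g ∈ U, BoundedPerm d' g) ∧
      (∀ g ∈ Subgroup.closure ((G : Set (Equiv.Perm Ω)) ∪ U), BoundedPerm d' g) := by
  classical
  set S : Set (Equiv.Perm Ω) := U ∪ (fun g => g⁻¹) '' U with hSdef
  have hSinv : ∀ g ∈ S, g⁻¹ ∈ S := by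
    rintro g (hg | ⟨h, hh, rfl⟩)
    · exact Or.inr ⟨g, hg, rfl⟩
    · exact Or.inl (by simpa using hh)
  have hUS : U ⊆ S := Set.subset_union_left
  have hSκ : #S < κ := lt_of_le_of_lt (Cardinal.mk_union_le _ _)
    (Cardinal.add_lt_of_lt hreg.aleph0_le hU (lt_of_le_of_lt Cardinal.mk_image_le hU))
  have hd' : IsGenMetric (dPrime d S) := dPrime_isGenMetric hd hSinv
  have hUbdd : ∀ g ∈ U, BoundedPerm (dPrime d S) g := by
    intro g hg
    have h1 : ∀ α : Ω, dPrime d S α (g α) ≤ 1 := by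
      intro α
      refine le_trans (iInf_le _ ([] : List Ω)) ?_
      refine le_trans (min_le_right _ _) ?_
      rw [jmp_eq_one (hUS hg) α]
    exact lt_of_le_of_lt (iSup_le h1) ENNReal.one_lt_top
  refine ⟨dPrime d S, hd', fun α β => dPrime_le α β, ?_, ?_, hUbdd, ?_⟩
  · -- Uncrowded
    intro α r hr
    obtain ⟨n₀, hn₀⟩ := ENNReal.exists_nat_gt hr.ne
    exact lt_of_le_of_lt
      (Cardinal.mk_le_mk_of_subset (gball_dPrime_subset_reach hd hn₀.le α))
      (reach_card_lt hreg hun hSκ hr n₀ α)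
  · -- UnifUncrowded
    intro hunif r hr
    obtain ⟨n₀, hn₀⟩ := ENNReal.exists_nat_gt hr.ne
    obtain ⟨lam, hlamκ, hlam⟩ := hunif r hr
    refine ⟨muFun (lam ⊔ #S) n₀, muFun_lt hreg (max_lt hlamκ hSκ) n₀, fun α => ?_⟩
    refine le_trans
      (Cardinal.mk_le_mk_of_subset (gball_dPrime_subset_reach hd hn₀.le α)) ?_
    exact reach_card_le (fun β => (hlam β).trans le_sup_left) le_sup_right n₀ α
  · -- closure bounded
    intro g hg
    have hsub : ((G : Set (Equiv.Perm Ω)) ∪ U) ⊆ (FN (dPrime d S) hd' : Set (Equiv.Perm Ω)) := by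
      rintro h (hh | hh)
      · show (⨆ α : Ω, dPrime d S α (h α)) < ⊤
        exact lt_of_le_of_lt (iSup_mono fun α => dPrime_le α _) (hG h hh)
      · exact hUbdd h hh
    exact (Subgroup.closure_le (FN (dPrime d S) hd')).2 hsub hg
end

section
/- Call a permutation g of the set ω of natural numbers local if for every i ∈ ω there exists j > i in ω such that g carries the set {0, 1, …, j−1} to itself. Then every permutation f of ω is a product g·h of two local permutations. -/
open scoped Cardinal ENNReal

universe u

variable {Ω : Type u}

/-- A permutation `g` of `ℕ` is local if for every `i` there is `j > i` with
`g` carrying `{0, …, j-1}` onto itself. -/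
def IsLocalPerm (g : Equiv.Perm ℕ) : Prop :=
  ∀ i : ℕ, ∃ j > i, (g : ℕ → ℕ) '' {k | k < j} = {k | k < j}

namespace Stmt5Aux

noncomputable section

variable (f : Equiv.Perm ℕ)

def nseq : ℕ → ℕ
  | 0 => 0
  | k + 1 => ((Finset.range (nseq k)).sup fun m => max (f m) (f.symm m)) + nseq k + 1

lemma nseq_zero : nseq f 0 = 0 := rfl

lemma nseq_lt_succ (k : ℕ) : nseq f k < nseq f (k + 1) := by
  show nseq f k < _ + nseq f k + 1
  omega

lemma nseq_strictMono : StrictMono (nseq f) :=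
  strictMono_nat_of_lt_succ (nseq_lt_succ f)

lemma nseq_mono : Monotone (nseq f) := (nseq_strictMono f).monotone

lemma le_nseq (k : ℕ) : k ≤ nseq f k := (nseq_strictMono f).le_apply

lemma apply_lt {m k : ℕ} (h : m < nseq f k) : f m < nseq f (k + 1) := by
  have h1 : max (f m) (f.symm m) ≤
      (Finset.range (nseq f k)).sup fun m => max (f m) (f.symm m) :=
    Finset.le_sup (f := fun m => max (f m) (f.symm m)) (Finset.mem_range.2 h)
  have h2 : f m ≤ max (f m) (f.symm m) := le_max_left _ _
  show f m < _ + nseq f k + 1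
  omega

lemma symm_lt {m k : ℕ} (h : m < nseq f k) : f.symm m < nseq f (k + 1) := by
  have h1 : max (f m) (f.symm m) ≤
      (Finset.range (nseq f k)).sup fun m => max (f m) (f.symm m) :=
    Finset.le_sup (f := fun m => max (f m) (f.symm m)) (Finset.mem_range.2 h)
  have h2 : f.symm m ≤ max (f m) (f.symm m) := le_max_right _ _
  show f.symm m < _ + nseq f k + 1
  omega

lemma exists_blk (m : ℕ) : ∃ k, m < nseq f (2 * k + 2) :=
  ⟨m, lt_of_lt_of_le (by omega) (le_nseq f (2 * m + 2))⟩

def blk (m : ℕ) : ℕ := Nat.find (exists_blk f m)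

lemma lt_nseq_blk (m : ℕ) : m < nseq f (2 * blk f m + 2) := Nat.find_spec (exists_blk f m)

lemma nseq_blk_le (m : ℕ) : nseq f (2 * blk f m) ≤ m := by
  rcases Nat.eq_zero_or_pos (blk f m) with h | h
  · rw [h]; simp [nseq_zero]
  · have h2 := Nat.find_min (exists_blk f m) (show blk f m - 1 < blk f m by omega)
    have h3 : 2 * (blk f m - 1) + 2 = 2 * blk f m := by omega
    rw [h3] at h2
    omega

lemma blk_eq {m k : ℕ} (h1 : nseq f (2 * k) ≤ m) (h2 : m < nseq f (2 * k + 2)) :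
    blk f m = k := by
  refine le_antisymm (Nat.find_min' _ h2) ?_
  by_contra h
  push_neg at h
  have : 2 * blk f m + 2 ≤ 2 * k := by omega
  have := lt_of_lt_of_le (lt_nseq_blk f m) (nseq_mono f this)
  omega

lemma blk_le_of_lt {m k : ℕ} (h : m < nseq f (2 * k + 2)) : blk f m ≤ k :=
  Nat.find_min' _ h

lemma lt_n2k_iff {m k : ℕ} : m < nseq f (2 * k) ↔ blk f m < k := by
  constructor
  · intro h
    by_contra hc
    push_neg at hc
    exact absurd (lt_of_lt_of_le h (nseq_mono f (by omega : 2 * k ≤ 2 * blk f m)))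
      (not_lt.2 (nseq_blk_le f m))
  · intro h
    exact lt_of_lt_of_le (lt_nseq_blk f m) (nseq_mono f (by omega))

def Bk (k : ℕ) : Finset ℕ := Finset.Ico (nseq f (2 * k)) (nseq f (2 * k + 2))
def Tk (k : ℕ) : Finset ℕ := (Bk f k).filter fun m => f m < nseq f (2 * k + 1)
def Uk (k : ℕ) : Finset ℕ := Finset.Ico (nseq f (2 * k)) (nseq f (2 * k + 1))
def Tk' (k : ℕ) : Finset ℕ := Bk f k \ Tk f k
def Uk' (k : ℕ) : Finset ℕ := Bk f k \ Uk f k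

lemma mem_Bk {m k : ℕ} : m ∈ Bk f k ↔ nseq f (2 * k) ≤ m ∧ m < nseq f (2 * k + 2) :=
  Finset.mem_Ico

lemma blk_of_mem_Bk {m k : ℕ} (h : m ∈ Bk f k) : blk f m = k :=
  blk_eq f ((mem_Bk f).1 h).1 ((mem_Bk f).1 h).2

lemma mem_Tk {m k : ℕ} : m ∈ Tk f k ↔ m ∈ Bk f k ∧ f m < nseq f (2 * k + 1) :=
  Finset.mem_filter

lemma mem_Uk {m k : ℕ} : m ∈ Uk f k ↔ nseq f (2 * k) ≤ m ∧ m < nseq f (2 * k + 1) :=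
  Finset.mem_Ico

lemma Tk_subset (k : ℕ) : Tk f k ⊆ Bk f k := Finset.filter_subset _ _

lemma Uk_subset (k : ℕ) : Uk f k ⊆ Bk f k :=
  Finset.Ico_subset_Ico le_rfl (nseq_mono f (by omega))

lemma mem_Tk' {m k : ℕ} : m ∈ Tk' f k ↔ m ∈ Bk f k ∧ ¬ f m < nseq f (2 * k + 1) := by
  simp [Tk', Finset.mem_sdiff, mem_Tk, and_comm]
  tauto

lemma mem_Uk' {m k : ℕ} : m ∈ Uk' f k ↔ m ∈ Bk f k ∧ ¬ m < nseq f (2 * k + 1) := by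
  simp only [Uk', Finset.mem_sdiff, mem_Uk, mem_Bk]
  constructor
  · rintro ⟨⟨h1, h2⟩, h3⟩
    exact ⟨⟨h1, h2⟩, fun hc => h3 ⟨h1, hc⟩⟩
  · rintro ⟨⟨h1, h2⟩, h3⟩
    exact ⟨⟨h1, h2⟩, fun hc => h3 hc.2⟩

lemma Tk_eq (k : ℕ) :
    Tk f k = ((Finset.range (nseq f (2 * k + 1))).image f.symm) \
      Finset.range (nseq f (2 * k)) := by
  ext m
  simp only [mem_Tk, mem_Bk, Finset.mem_sdiff, Finset.mem_image, Finset.mem_range]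
  constructor
  · rintro ⟨⟨h1, h2⟩, h3⟩
    exact ⟨⟨f m, h3, f.symm_apply_apply m⟩, by omega⟩
  · rintro ⟨⟨j, hj, hjm⟩, h2⟩
    have hfm : f m = j := by rw [← hjm, f.apply_symm_apply]
    have hm2 : m < nseq f (2 * k + 2) := by
      have := symm_lt f hj
      rwa [hjm] at this
    exact ⟨⟨by omega, hm2⟩, by omega⟩

lemma card_Tk (k : ℕ) : (Tk f k).card = nseq f (2 * k + 1) - nseq f (2 * k) := by
  rw [Tk_eq]
  have hsub : Finset.range (nseq f (2 * k)) ⊆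
      (Finset.range (nseq f (2 * k + 1))).image f.symm := by
    intro m hm
    rw [Finset.mem_range] at hm
    refine Finset.mem_image.2 ⟨f m, Finset.mem_range.2 ?_, f.symm_apply_apply m⟩
    exact apply_lt f (lt_of_lt_of_le hm (nseq_mono f (by omega)))
  rw [Finset.card_sdiff_of_subset hsub, Finset.card_image_of_injective _ f.symm.injective,
    Finset.card_range, Finset.card_range]

lemma card_Uk (k : ℕ) : (Uk f k).card = nseq f (2 * k + 1) - nseq f (2 * k) :=
  Nat.card_Ico _ _

lemma card_TU (k : ℕ) : (Tk f k).card = (Uk f k).card := by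
  rw [card_Tk, card_Uk]

lemma card_TU' (k : ℕ) : (Tk' f k).card = (Uk' f k).card := by
  rw [Tk', Uk', Finset.card_sdiff_of_subset (Tk_subset f k), Finset.card_sdiff_of_subset (Uk_subset f k),
    card_Tk, card_Uk]

def e1 (k : ℕ) : {x // x ∈ Tk f k} ≃ {x // x ∈ Uk f k} := Finset.equivOfCardEq (card_TU f k)
def e2 (k : ℕ) : {x // x ∈ Tk' f k} ≃ {x // x ∈ Uk' f k} := Finset.equivOfCardEq (card_TU' f k)

lemma mem_Bk_blk (m : ℕ) : m ∈ Bk f (blk f m) :=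
  (mem_Bk f).2 ⟨nseq_blk_le f m, lt_nseq_blk f m⟩

def gfun (m : ℕ) : ℕ :=
  if h : f m < nseq f (2 * blk f m + 1)
  then (e1 f (blk f m) ⟨m, (mem_Tk f).2 ⟨mem_Bk_blk f m, h⟩⟩ : ℕ)
  else (e2 f (blk f m) ⟨m, (mem_Tk' f).2 ⟨mem_Bk_blk f m, h⟩⟩ : ℕ)

def ginv (m : ℕ) : ℕ :=
  if h : m < nseq f (2 * blk f m + 1)
  then ((e1 f (blk f m)).symm ⟨m, (mem_Uk f).2 ⟨nseq_blk_le f m, h⟩⟩ : ℕ)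
  else ((e2 f (blk f m)).symm ⟨m, (mem_Uk' f).2 ⟨mem_Bk_blk f m, h⟩⟩ : ℕ)

lemma gfun_mem_Uk {m : ℕ} (h : f m < nseq f (2 * blk f m + 1)) :
    gfun f m ∈ Uk f (blk f m) := by
  rw [gfun, dif_pos h]
  exact (e1 f (blk f m) _).2

lemma gfun_mem_Uk' {m : ℕ} (h : ¬ f m < nseq f (2 * blk f m + 1)) :
    gfun f m ∈ Uk' f (blk f m) := by
  rw [gfun, dif_neg h]
  exact (e2 f (blk f m) _).2

lemma gfun_mem_Bk (m : ℕ) : gfun f m ∈ Bk f (blk f m) := by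
  by_cases h : f m < nseq f (2 * blk f m + 1)
  · exact Uk_subset f _ (gfun_mem_Uk f h)
  · exact (Finset.sdiff_subset) (gfun_mem_Uk' f h)

lemma blk_gfun (m : ℕ) : blk f (gfun f m) = blk f m :=
  blk_of_mem_Bk f (gfun_mem_Bk f m)

lemma ginv_mem_Tk {m : ℕ} (h : m < nseq f (2 * blk f m + 1)) :
    ginv f m ∈ Tk f (blk f m) := by
  rw [ginv, dif_pos h]
  exact ((e1 f (blk f m)).symm _).2

lemma ginv_mem_Tk' {m : ℕ} (h : ¬ m < nseq f (2 * blk f m + 1)) :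
    ginv f m ∈ Tk' f (blk f m) := by
  rw [ginv, dif_neg h]
  exact ((e2 f (blk f m)).symm _).2

lemma ginv_mem_Bk (m : ℕ) : ginv f m ∈ Bk f (blk f m) := by
  by_cases h : m < nseq f (2 * blk f m + 1)
  · exact Tk_subset f _ (ginv_mem_Tk f h)
  · exact (Finset.sdiff_subset) (ginv_mem_Tk' f h)

lemma blk_ginv (m : ℕ) : blk f (ginv f m) = blk f m :=
  blk_of_mem_Bk f (ginv_mem_Bk f m)

lemma gfun_eq {k m : ℕ} (hm : m ∈ Bk f k) :
    gfun f m = if h : f m < nseq f (2 * k + 1)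
      then (e1 f k ⟨m, (mem_Tk f).2 ⟨hm, h⟩⟩ : ℕ)
      else (e2 f k ⟨m, (mem_Tk' f).2 ⟨hm, h⟩⟩ : ℕ) := by
  have hb : blk f m = k := blk_of_mem_Bk f hm
  subst hb
  rfl

lemma ginv_eq {k m : ℕ} (hm : m ∈ Bk f k) :
    ginv f m = if h : m < nseq f (2 * k + 1)
      then ((e1 f k).symm ⟨m, (mem_Uk f).2 ⟨((mem_Bk f).1 hm).1, h⟩⟩ : ℕ)
      else ((e2 f k).symm ⟨m, (mem_Uk' f).2 ⟨hm, h⟩⟩ : ℕ) := by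
  have hb : blk f m = k := blk_of_mem_Bk f hm
  subst hb
  rfl

lemma ginv_apply_e1 (k : ℕ) (x : {x // x ∈ Tk f k}) : ginv f (e1 f k x : ℕ) = x := by
  have hu := (e1 f k x).2
  rw [ginv_eq f (Uk_subset f k hu), dif_pos ((mem_Uk f).1 hu).2]
  exact congrArg Subtype.val ((e1 f k).symm_apply_apply x)

lemma ginv_apply_e2 (k : ℕ) (x : {x // x ∈ Tk' f k}) : ginv f (e2 f k x : ℕ) = x := by
  have hu := (e2 f k x).2
  have hnot : ¬ (e2 f k x : ℕ) < nseq f (2 * k + 1) := ((mem_Uk' f).1 hu).2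
  rw [ginv_eq f ((mem_Uk' f).1 hu).1, dif_neg hnot]
  exact congrArg Subtype.val ((e2 f k).symm_apply_apply x)

lemma gfun_apply_e1symm (k : ℕ) (y : {x // x ∈ Uk f k}) :
    gfun f ((e1 f k).symm y : ℕ) = y := by
  have ht := ((e1 f k).symm y).2
  rw [gfun_eq f (Tk_subset f k ht), dif_pos ((mem_Tk f).1 ht).2]
  exact congrArg Subtype.val ((e1 f k).apply_symm_apply y)

lemma gfun_apply_e2symm (k : ℕ) (y : {x // x ∈ Uk' f k}) :
    gfun f ((e2 f k).symm y : ℕ) = y := by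
  have ht := ((e2 f k).symm y).2
  have hnot : ¬ f ((e2 f k).symm y : ℕ) < nseq f (2 * k + 1) := ((mem_Tk' f).1 ht).2
  rw [gfun_eq f ((mem_Tk' f).1 ht).1, dif_neg hnot]
  exact congrArg Subtype.val ((e2 f k).apply_symm_apply y)

lemma ginv_gfun (m : ℕ) : ginv f (gfun f m) = m := by
  by_cases h : f m < nseq f (2 * blk f m + 1)
  · rw [gfun, dif_pos h]
    exact ginv_apply_e1 f _ _
  · rw [gfun, dif_neg h]
    exact ginv_apply_e2 f _ _

lemma gfun_ginv (m : ℕ) : gfun f (ginv f m) = m := by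
  by_cases h : m < nseq f (2 * blk f m + 1)
  · rw [ginv, dif_pos h]
    exact gfun_apply_e1symm f _ _
  · rw [ginv, dif_neg h]
    exact gfun_apply_e2symm f _ _

def gperm : Equiv.Perm ℕ := ⟨gfun f, ginv f, ginv_gfun f, gfun_ginv f⟩

lemma gperm_apply (m : ℕ) : gperm f m = gfun f m := rfl

lemma gperm_inv_apply (m : ℕ) : (gperm f)⁻¹ m = ginv f m := rfl

lemma gfun_lt_n2k {m K : ℕ} (h : m < nseq f (2 * K)) : gfun f m < nseq f (2 * K) := by
  have hb : blk f m < K := (lt_n2k_iff f).1 h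
  have h2 : gfun f m < nseq f (2 * blk f m + 2) := ((mem_Bk f).1 (gfun_mem_Bk f m)).2
  exact lt_of_lt_of_le h2 (nseq_mono f (by omega))

lemma ginv_lt_n2k {m K : ℕ} (h : m < nseq f (2 * K)) : ginv f m < nseq f (2 * K) := by
  have hb : blk f m < K := (lt_n2k_iff f).1 h
  have h2 : ginv f m < nseq f (2 * blk f m + 2) := ((mem_Bk f).1 (ginv_mem_Bk f m)).2
  exact lt_of_lt_of_le h2 (nseq_mono f (by omega))

lemma gperm_local : IsLocalPerm (gperm f) := by
  intro i
  refine ⟨nseq f (2 * (i + 1)), ?_, ?_⟩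
  · have := le_nseq f (2 * (i + 1)); omega
  · ext x
    simp only [Set.mem_image, Set.mem_setOf_eq]
    constructor
    · rintro ⟨m, hm, rfl⟩
      exact gfun_lt_n2k f hm
    · intro hx
      exact ⟨ginv f x, ginv_lt_n2k f hx, gfun_ginv f x⟩

lemma hmap {m K : ℕ} (h : m < nseq f (2 * K + 1)) :
    f (ginv f m) < nseq f (2 * K + 1) := by
  have hj : blk f m ≤ K :=
    blk_le_of_lt f (lt_of_lt_of_le h (nseq_mono f (by omega)))
  rcases lt_or_eq_of_le hj with hj | hj
  · have h2 : ginv f m < nseq f (2 * blk f m + 2) := ((mem_Bk f).1 (ginv_mem_Bk f m)).2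
    have h3 : ginv f m < nseq f (2 * K) := lt_of_lt_of_le h2 (nseq_mono f (by omega))
    exact apply_lt f h3
  · have h' : m < nseq f (2 * blk f m + 1) := by rw [hj]; exact h
    have := ((mem_Tk f).1 (ginv_mem_Tk f h')).2
    rwa [hj] at this
  
lemma hinvmap {m K : ℕ} (h : m < nseq f (2 * K + 1)) :
    gfun f (f.symm m) < nseq f (2 * K + 1) := by
  have hs : f.symm m < nseq f (2 * K + 2) := symm_lt f h
  have hj : blk f (f.symm m) ≤ K := blk_le_of_lt f hs
  rcases lt_or_eq_of_le hj with hj | hj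
  · have h2 : gfun f (f.symm m) < nseq f (2 * blk f (f.symm m) + 2) :=
      ((mem_Bk f).1 (gfun_mem_Bk f (f.symm m))).2
    exact lt_of_lt_of_le h2 (nseq_mono f (by omega))
  · have h' : f (f.symm m) < nseq f (2 * blk f (f.symm m) + 1) := by
      rw [hj, f.apply_symm_apply]; exact h
    have := ((mem_Uk f).1 (gfun_mem_Uk f h')).2
    rwa [hj] at this

lemma hperm_local : IsLocalPerm (f * (gperm f)⁻¹) := by
  intro i
  refine ⟨nseq f (2 * (i + 1) + 1), ?_, ?_⟩
  · have := le_nseq f (2 * (i + 1) + 1); omega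
  · ext x
    simp only [Set.mem_image, Set.mem_setOf_eq]
    constructor
    · rintro ⟨m, hm, rfl⟩
      show f ((gperm f)⁻¹ m) < _
      rw [gperm_inv_apply]
      exact hmap f hm
    · intro hx
      refine ⟨gfun f (f.symm x), hinvmap f hx, ?_⟩
      show f ((gperm f)⁻¹ (gfun f (f.symm x))) = x
      rw [gperm_inv_apply, ginv_gfun, f.apply_symm_apply]


theorem stmt5 (f : Equiv.Perm ℕ) :
    ∃ g h : Equiv.Perm ℕ, IsLocalPerm g ∧ IsLocalPerm h ∧ f = h * g := by
  refine ⟨gperm f, f * (gperm f)⁻¹, gperm_local f, hperm_local f, ?_⟩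
  group

end

end Stmt5Aux

/-- Lemma 5.2: every permutation of `ℕ` is a product of two local
permutations. -/
theorem stmt5 (f : Equiv.Perm ℕ) :
    ∃ g h : Equiv.Perm ℕ, IsLocalPerm g ∧ IsLocalPerm h ∧ f = h * g :=
  Stmt5Aux.stmt5 f
end

section
/- Let Ω be a countably infinite set and G a subgroup of Sym(Ω), and suppose there exist two disjoint sequences (αᵢ)_{i∈ω} and (βᵢ)_{i∈ω} of distinct elements of Ω such that for every sequence (γᵢ)_{i∈ω} with γᵢ ∈ {αᵢ, βᵢ} for each i, there exists g ∈ G with γᵢ = αᵢg for all i. Then S_(A₀) ≼ G, where A₀ is a partition of Ω having infinitely many 1-element members, infinitely many 2-element members, and no other members. -/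
open scoped Cardinal ENNReal

universe u

variable {Ω : Type u}

theorem Equiv.Perm.inv_apply_self {X : Type*} (f : Equiv.Perm X) (x : X) : f⁻¹ (f x) = x :=
  Equiv.symm_apply_apply f x

theorem Equiv.Perm.apply_inv_self {X : Type*} (f : Equiv.Perm X) (x : X) : f (f⁻¹ x) = x :=
  Equiv.apply_symm_apply f x

universe v

namespace BSaux
variable {Ω : Type u} {I : Type v}

def PinvOK (u v : I → Ω) : Prop :=
  Function.Injective u ∧ Function.Injective v ∧ ∀ i j, u i ≠ v j

open Classical in
noncomputable def pinvFun (u v : I → Ω) (x : Ω) : Ω :=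
  if h : ∃ i, u i = x then v h.choose
  else if h' : ∃ i, v i = x then u h'.choose
  else x

theorem pinvFun_u {u v : I → Ω} (h : PinvOK u v) (i : I) :
    pinvFun u v (u i) = v i := by
  have hex : ∃ j, u j = u i := ⟨i, rfl⟩
  simp only [pinvFun, dif_pos hex]
  exact congrArg v (h.1 hex.choose_spec)

theorem pinvFun_v {u v : I → Ω} (h : PinvOK u v) (i : I) :
    pinvFun u v (v i) = u i := by
  have hne : ¬∃ j, u j = v i := by rintro ⟨j, hj⟩; exact h.2.2 j i hj
  have hex : ∃ j, v j = v i := ⟨i, rfl⟩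
  simp only [pinvFun, dif_neg hne, dif_pos hex]
  exact congrArg u (h.2.1 hex.choose_spec)

theorem pinvFun_fix {u v : I → Ω} {x : Ω} (h1 : ∀ i, u i ≠ x) (h2 : ∀ i, v i ≠ x) :
    pinvFun u v x = x := by
  have hne : ¬∃ j, u j = x := by rintro ⟨j, hj⟩; exact h1 j hj
  have hne' : ¬∃ j, v j = x := by rintro ⟨j, hj⟩; exact h2 j hj
  simp only [pinvFun, dif_neg hne, dif_neg hne']

theorem pinv_invol {u v : I → Ω} (h : PinvOK u v) :
    Function.Involutive (pinvFun u v) := by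
  intro x
  by_cases h1 : ∃ i, u i = x
  · obtain ⟨i, rfl⟩ := h1
    rw [pinvFun_u h i, pinvFun_v h i]
  · by_cases h2 : ∃ i, v i = x
    · obtain ⟨i, rfl⟩ := h2
      rw [pinvFun_v h i, pinvFun_u h i]
    · push_neg at h1 h2
      rw [pinvFun_fix h1 h2, pinvFun_fix h1 h2]

noncomputable def pinv (u v : I → Ω) (h : PinvOK u v) : Equiv.Perm Ω :=
  (pinv_invol h).toPerm

theorem pinv_u {u v : I → Ω} (h : PinvOK u v) (i : I) : pinv u v h (u i) = v i := by
  simpa [pinv, Function.Involutive.coe_toPerm] using pinvFun_u h i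

theorem pinv_v {u v : I → Ω} (h : PinvOK u v) (i : I) : pinv u v h (v i) = u i := by
  simpa [pinv, Function.Involutive.coe_toPerm] using pinvFun_v h i

theorem pinv_fix {u v : I → Ω} (h : PinvOK u v) {x : Ω}
    (h1 : ∀ i, u i ≠ x) (h2 : ∀ i, v i ≠ x) : pinv u v h x = x := by
  simpa [pinv, Function.Involutive.coe_toPerm] using pinvFun_fix h1 h2

/-- Hypothesis bundle. -/
structure Frame (α β : ℕ → Ω) (p q : ℤ → ℕ) : Prop where
  hα : Function.Injective α
  hβ : Function.Injective β
  hdisj : ∀ i j, α i ≠ β j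
  hp : Function.Injective p
  hq : Function.Injective q
  hpq : ∀ i j, p i ≠ q j
  hcover : ∀ k, (∃ i, p i = k) ∨ (∃ i, q i = k)

variable {α β : ℕ → Ω} {p q : ℤ → ℕ}

theorem Frame.ha (F : Frame α β p q) : Function.Injective fun i : ℤ => α (p i) :=
  fun i j hij => F.hp (F.hα hij)

theorem Frame.hb (F : Frame α β p q) : Function.Injective fun i : ℤ => α (q i) :=
  fun i j hij => F.hq (F.hα hij)

theorem Frame.hab (F : Frame α β p q) : ∀ i j : ℤ, α (p i) ≠ α (q j) :=
  fun i j hij => F.hpq i j (F.hα hij)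

theorem Frame.ok_ab (F : Frame α β p q) :
    PinvOK (fun i : ℤ => α (p i)) (fun i : ℤ => α (q i)) :=
  ⟨F.ha, F.hb, F.hab⟩

/-- the full pair swap `c`. -/
noncomputable def cP (F : Frame α β p q) : Equiv.Perm Ω :=
  pinv α β ⟨F.hα, F.hβ, F.hdisj⟩

theorem cP_a (F : Frame α β p q) (k : ℕ) : cP F (α k) = β k := pinv_u _ k
theorem cP_b (F : Frame α β p q) (k : ℕ) : cP F (β k) = α k := pinv_v _ k
theorem cP_fix (F : Frame α β p q) {x : Ω} (h1 : ∀ k, α k ≠ x) (h2 : ∀ k, β k ≠ x) :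
    cP F x = x := pinv_fix _ h1 h2

/-- the blockwise swap `e₂`. -/
noncomputable def e2P (F : Frame α β p q) : Equiv.Perm Ω :=
  pinv _ _ F.ok_ab

theorem e2P_a (F : Frame α β p q) (i : ℤ) : e2P F (α (p i)) = α (q i) := pinv_u _ i
theorem e2P_b (F : Frame α β p q) (i : ℤ) : e2P F (α (q i)) = α (p i) := pinv_v _ i
theorem e2P_fix (F : Frame α β p q) {x : Ω}
    (h1 : ∀ i : ℤ, α (p i) ≠ x) (h2 : ∀ i : ℤ, α (q i) ≠ x) : e2P F x = x :=
  pinv_fix _ h1 h2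

section Shift

abbrev shI : Type := {i : ℤ // 0 < i} ⊕ {i : ℤ // 0 < i}
abbrev shJ : Type := {i : ℤ // 1 ≤ i} ⊕ {i : ℤ // 1 ≤ i}

variable (α q p)

def u0 : shI → Ω := Sum.elim (fun i => α (p i.1)) (fun i => α (q i.1))
def v0 : shI → Ω := Sum.elim (fun i => α (p (-i.1))) (fun i => α (q (-i.1)))
def u1 : shJ → Ω := Sum.elim (fun i => α (p i.1)) (fun i => α (q i.1))
def v1 : shJ → Ω := Sum.elim (fun i => α (p (1 - i.1))) (fun i => α (q (1 - i.1)))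

variable {α q p}

theorem Frame.ok_r0 (F : Frame α β p q) : PinvOK (u0 α p q) (v0 α p q) := by
  refine ⟨?_, ?_, ?_⟩
  · rintro (⟨i, hi⟩ | ⟨i, hi⟩) (⟨j, hj⟩ | ⟨j, hj⟩) hij <;>
      (try simp only [u0, v0, Sum.elim_inl, Sum.elim_inr] at hij) <;>
      first
        | exact absurd hij (F.hab _ _)
        | exact absurd hij.symm (F.hab _ _)
        | (have h2 : i = j := by
              first
                | (have := F.hp (F.hα hij); omega)
                | (have := F.hq (F.hα hij); omega)
           subst h2
           rfl)
  · rintro (⟨i, hi⟩ | ⟨i, hi⟩) (⟨j, hj⟩ | ⟨j, hj⟩) hij <;>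
      (try simp only [u0, v0, Sum.elim_inl, Sum.elim_inr] at hij) <;>
      first
        | exact absurd hij (F.hab _ _)
        | exact absurd hij.symm (F.hab _ _)
        | (have h2 : i = j := by
              first
                | (have := F.hp (F.hα hij); omega)
                | (have := F.hq (F.hα hij); omega)
           subst h2
           rfl)
  · rintro (⟨i, hi⟩ | ⟨i, hi⟩) (⟨j, hj⟩ | ⟨j, hj⟩) hij <;>
      (try simp only [u0, v0, Sum.elim_inl, Sum.elim_inr] at hij) <;>
      first
        | exact F.hab _ _ hij
        | exact F.hab _ _ hij.symm
        | (have := F.hp (F.hα hij); omega)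
        | (have := F.hq (F.hα hij); omega)

theorem Frame.ok_r1 (F : Frame α β p q) : PinvOK (u1 α p q) (v1 α p q) := by
  refine ⟨?_, ?_, ?_⟩
  · rintro (⟨i, hi⟩ | ⟨i, hi⟩) (⟨j, hj⟩ | ⟨j, hj⟩) hij <;>
      (try simp only [u1, v1, Sum.elim_inl, Sum.elim_inr] at hij) <;>
      first
        | exact absurd hij (F.hab _ _)
        | exact absurd hij.symm (F.hab _ _)
        | (have h2 : i = j := by
              first
                | (have := F.hp (F.hα hij); omega)
                | (have := F.hq (F.hα hij); omega)
           subst h2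
           rfl)
  · rintro (⟨i, hi⟩ | ⟨i, hi⟩) (⟨j, hj⟩ | ⟨j, hj⟩) hij <;>
      (try simp only [u1, v1, Sum.elim_inl, Sum.elim_inr] at hij) <;>
      first
        | exact absurd hij (F.hab _ _)
        | exact absurd hij.symm (F.hab _ _)
        | (have h2 : i = j := by
              first
                | (have := F.hp (F.hα hij); omega)
                | (have := F.hq (F.hα hij); omega)
           subst h2
           rfl)
  · rintro (⟨i, hi⟩ | ⟨i, hi⟩) (⟨j, hj⟩ | ⟨j, hj⟩) hij <;>
      (try simp only [u1, v1, Sum.elim_inl, Sum.elim_inr] at hij) <;>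
      first
        | exact F.hab _ _ hij
        | exact F.hab _ _ hij.symm
        | (have := F.hp (F.hα hij); omega)
        | (have := F.hq (F.hα hij); omega)

/-- the shift `s`. -/
noncomputable def shP (F : Frame α β p q) : Equiv.Perm Ω :=
  pinv _ _ F.ok_r1 * pinv _ _ F.ok_r0

theorem r0_fix (F : Frame α β p q) {x : Ω}
    (h1 : ∀ k : ℤ, α (p k) ≠ x) (h2 : ∀ k : ℤ, α (q k) ≠ x) :
    pinv _ _ F.ok_r0 x = x := by
  refine pinv_fix _ ?_ ?_ <;> rintro (⟨k, hk⟩ | ⟨k, hk⟩) <;>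
    first | exact h1 _ | exact h2 _

theorem r1_fix (F : Frame α β p q) {x : Ω}
    (h1 : ∀ k : ℤ, α (p k) ≠ x) (h2 : ∀ k : ℤ, α (q k) ≠ x) :
    pinv _ _ F.ok_r1 x = x := by
  refine pinv_fix _ ?_ ?_ <;> rintro (⟨k, hk⟩ | ⟨k, hk⟩) <;>
    first | exact h1 _ | exact h2 _

theorem shP_fix (F : Frame α β p q) {x : Ω}
    (h1 : ∀ k : ℤ, α (p k) ≠ x) (h2 : ∀ k : ℤ, α (q k) ≠ x) :
    shP F x = x := by
  simp only [shP, Equiv.Perm.mul_apply]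
  rw [r0_fix F h1 h2, r1_fix F h1 h2]

theorem shP_a (F : Frame α β p q) (i : ℤ) : shP F (α (p i)) = α (p (i + 1)) := by
  simp only [shP, Equiv.Perm.mul_apply]
  rcases lt_trichotomy i 0 with hi | hi | hi
  · have e1 : pinv _ _ F.ok_r0 (α (p i)) = α (p (-i)) := by
      have harg : α (p i) = v0 α p q (Sum.inl ⟨-i, by omega⟩) := by
        show α (p i) = α (p (-(-i))); norm_num
      rw [harg, pinv_v]
      rfl
    have e2 : pinv _ _ F.ok_r1 (α (p (-i))) = α (p (i + 1)) := by
      have harg : α (p (-i)) = u1 α p q (Sum.inl ⟨-i, by omega⟩) := rfl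
      rw [harg, pinv_u]
      show α (p (1 - -i)) = α (p (i + 1))
      congr 2
      omega
    rw [e1, e2]
  · subst hi
    have e1 : pinv _ _ F.ok_r0 (α (p 0)) = α (p 0) := by
      refine pinv_fix _ ?_ ?_ <;> rintro (⟨k, hk⟩ | ⟨k, hk⟩) hc <;>
        (try simp only [u0, v0, Sum.elim_inl, Sum.elim_inr] at hc) <;>
        first
          | exact F.hab _ _ hc
          | exact F.hab _ _ hc.symm
          | (have := F.hp (F.hα hc); omega)
          | (have := F.hq (F.hα hc); omega)
    have e2 : pinv _ _ F.ok_r1 (α (p 0)) = α (p (0 + 1)) := by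
      have harg : α (p 0) = v1 α p q (Sum.inl ⟨1, by omega⟩) := rfl
      rw [harg, pinv_v]
      rfl
    rw [e1, e2]
  · have e1 : pinv _ _ F.ok_r0 (α (p i)) = α (p (-i)) := by
      have harg : α (p i) = u0 α p q (Sum.inl ⟨i, hi⟩) := rfl
      rw [harg, pinv_u]
      rfl
    have e2 : pinv _ _ F.ok_r1 (α (p (-i))) = α (p (i + 1)) := by
      have harg : α (p (-i)) = v1 α p q (Sum.inl ⟨i + 1, by omega⟩) := by
        show α (p (-i)) = α (p (1 - (i + 1))); congr 2; omega
      rw [harg, pinv_v]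
      show α (p (i + 1)) = α (p (i + 1)); rfl
    rw [e1, e2]

theorem shP_b (F : Frame α β p q) (i : ℤ) : shP F (α (q i)) = α (q (i + 1)) := by
  simp only [shP, Equiv.Perm.mul_apply]
  rcases lt_trichotomy i 0 with hi | hi | hi
  · have e1 : pinv _ _ F.ok_r0 (α (q i)) = α (q (-i)) := by
      have harg : α (q i) = v0 α p q (Sum.inr ⟨-i, by omega⟩) := by
        show α (q i) = α (q (-(-i))); norm_num
      rw [harg, pinv_v]
      rfl
    have e2 : pinv _ _ F.ok_r1 (α (q (-i))) = α (q (i + 1)) := by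
      have harg : α (q (-i)) = u1 α p q (Sum.inr ⟨-i, by omega⟩) := rfl
      rw [harg, pinv_u]
      show α (q (1 - -i)) = α (q (i + 1))
      congr 2
      omega
    rw [e1, e2]
  · subst hi
    have e1 : pinv _ _ F.ok_r0 (α (q 0)) = α (q 0) := by
      refine pinv_fix _ ?_ ?_ <;> rintro (⟨k, hk⟩ | ⟨k, hk⟩) hc <;>
        (try simp only [u0, v0, Sum.elim_inl, Sum.elim_inr] at hc) <;>
        first
          | exact F.hab _ _ hc
          | exact F.hab _ _ hc.symm
          | (have := F.hp (F.hα hc); omega)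
          | (have := F.hq (F.hα hc); omega)
    have e2 : pinv _ _ F.ok_r1 (α (q 0)) = α (q (0 + 1)) := by
      have harg : α (q 0) = v1 α p q (Sum.inr ⟨1, by omega⟩) := rfl
      rw [harg, pinv_v]
      rfl
    rw [e1, e2]
  · have e1 : pinv _ _ F.ok_r0 (α (q i)) = α (q (-i)) := by
      have harg : α (q i) = u0 α p q (Sum.inr ⟨i, hi⟩) := rfl
      rw [harg, pinv_u]
      rfl
    have e2 : pinv _ _ F.ok_r1 (α (q (-i))) = α (q (i + 1)) := by
      have harg : α (q (-i)) = v1 α p q (Sum.inr ⟨i + 1, by omega⟩) := by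
        show α (q (-i)) = α (q (1 - (i + 1))); congr 2; omega
      rw [harg, pinv_v]
      show α (q (i + 1)) = α (q (i + 1)); rfl
    rw [e1, e2]
end Shift
noncomputable def Dw (F : Frame α β p q) (g : Equiv.Perm Ω) : Equiv.Perm Ω :=
  g⁻¹ * e2P F * g * (g⁻¹ * (cP F * (e2P F * (cP F * g))))

noncomputable def Rw (F : Frame α β p q) (g : Equiv.Perm Ω) : Equiv.Perm Ω :=
  Dw F g * e2P F * (Dw F g * e2P F)

noncomputable def Fw (F : Frame α β p q) (g : Equiv.Perm Ω) : Equiv.Perm Ω :=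
  Rw F g * (shP F)⁻¹ * (Rw F g * shP F)

section DSpec

variable (F : Frame α β p q) (g : Equiv.Perm Ω)

theorem Dw_na (i : ℤ) : Dw F g (g⁻¹ (α (p i))) = g⁻¹ (α (q i)) := by
  have s0 : g (g⁻¹ (α (p i))) = α (p i) := Equiv.Perm.apply_inv_self _ _
  have e1 : e2P F (β (p i)) = β (p i) :=
    e2P_fix F (fun k => F.hdisj (p k) (p i)) (fun k => F.hdisj (q k) (p i))
  simp only [Dw, Equiv.Perm.mul_apply]
  rw [s0, cP_a, e1, cP_b, s0, e2P_a]

theorem Dw_nb (i : ℤ) : Dw F g (g⁻¹ (α (q i))) = g⁻¹ (α (p i)) := by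
  have s0 : g (g⁻¹ (α (q i))) = α (q i) := Equiv.Perm.apply_inv_self _ _
  have e1 : e2P F (β (q i)) = β (q i) :=
    e2P_fix F (fun k => F.hdisj (p k) (q i)) (fun k => F.hdisj (q k) (q i))
  simp only [Dw, Equiv.Perm.mul_apply]
  rw [s0, cP_a, e1, cP_b, s0, e2P_b]

theorem Dw_ma (i : ℤ) : Dw F g (g⁻¹ (β (p i))) = g⁻¹ (β (q i)) := by
  have s0 : g (g⁻¹ (β (p i))) = β (p i) := Equiv.Perm.apply_inv_self _ _
  have s1 : g (g⁻¹ (β (q i))) = β (q i) := Equiv.Perm.apply_inv_self _ _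
  have e1 : e2P F (β (q i)) = β (q i) :=
    e2P_fix F (fun k => F.hdisj (p k) (q i)) (fun k => F.hdisj (q k) (q i))
  simp only [Dw, Equiv.Perm.mul_apply]
  rw [s0, cP_b, e2P_a, cP_a, s1, e1]

theorem Dw_mb (i : ℤ) : Dw F g (g⁻¹ (β (q i))) = g⁻¹ (β (p i)) := by
  have s0 : g (g⁻¹ (β (q i))) = β (q i) := Equiv.Perm.apply_inv_self _ _
  have s1 : g (g⁻¹ (β (p i))) = β (p i) := Equiv.Perm.apply_inv_self _ _
  have e1 : e2P F (β (p i)) = β (p i) :=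
    e2P_fix F (fun k => F.hdisj (p k) (p i)) (fun k => F.hdisj (q k) (p i))
  simp only [Dw, Equiv.Perm.mul_apply]
  rw [s0, cP_b, e2P_b, cP_a, s1, e1]

theorem Dw_fix {x : Ω}
    (h1 : ∀ i : ℤ, g⁻¹ (α (p i)) ≠ x) (h2 : ∀ i : ℤ, g⁻¹ (α (q i)) ≠ x)
    (h3 : ∀ i : ℤ, g⁻¹ (β (p i)) ≠ x) (h4 : ∀ i : ℤ, g⁻¹ (β (q i)) ≠ x) :
    Dw F g x = x := by
  have hgα : ∀ k, α k ≠ g x := by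
    intro k hk
    have hxk : g⁻¹ (α k) = x := by rw [hk, Equiv.Perm.inv_apply_self]
    rcases F.hcover k with ⟨i, rfl⟩ | ⟨i, rfl⟩
    · exact h1 i hxk
    · exact h2 i hxk
  have hgβ : ∀ k, β k ≠ g x := by
    intro k hk
    have hxk : g⁻¹ (β k) = x := by rw [hk, Equiv.Perm.inv_apply_self]
    rcases F.hcover k with ⟨i, rfl⟩ | ⟨i, rfl⟩
    · exact h3 i hxk
    · exact h4 i hxk
  have e0 : cP F (g x) = g x := cP_fix F hgα hgβ
  have e1 : e2P F (g x) = g x :=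
    e2P_fix F (fun k => hgα (p k)) (fun k => hgα (q k))
  simp only [Dw, Equiv.Perm.mul_apply]
  rw [e0, e1, e0, Equiv.Perm.apply_inv_self, e1, Equiv.Perm.inv_apply_self]

end DSpec
section RSpec

theorem ginv_q (F : Frame α β p q) (g : Equiv.Perm Ω) (hgq : ∀ i, g (α (q i)) = α (q i)) (i : ℤ) :
    g⁻¹ (α (q i)) = α (q i) := by
  conv_lhs => rw [← hgq i]
  exact Equiv.Perm.inv_apply_self _ _

theorem ginv_p (F : Frame α β p q) (g : Equiv.Perm Ω) (χ : ℤ → Prop) (hgp : ∀ i, χ i → g (α (p i)) = β (p i)) {i : ℤ} (hχ : χ i) :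
    g⁻¹ (β (p i)) = α (p i) := by
  conv_lhs => rw [← hgp i hχ]
  exact Equiv.Perm.inv_apply_self _ _

theorem ginv_p' (F : Frame α β p q) (g : Equiv.Perm Ω) (χ : ℤ → Prop) (hgp' : ∀ i, ¬χ i → g (α (p i)) = α (p i)) {i : ℤ} (hχ : ¬χ i) :
    g⁻¹ (α (p i)) = α (p i) := by
  conv_lhs => rw [← hgp' i hχ]
  exact Equiv.Perm.inv_apply_self _ _

theorem na_ne (F : Frame α β p q) (g : Equiv.Perm Ω) (χ : ℤ → Prop) (hgo : ∀ k, g (α k) = α k ∨ g (α k) = β k)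
    (hgp : ∀ i, χ i → g (α (p i)) = β (p i)) {i : ℤ} (hχ : χ i) (k : ℕ) :
    g⁻¹ (α (p i)) ≠ α k := by
  intro hk
  have h2 : α (p i) = g (α k) := by
    conv_lhs => rw [← Equiv.Perm.apply_inv_self g (α (p i))]
    rw [hk]
  rcases hgo k with h3 | h3
  · rw [h3] at h2
    have hk2 : p i = k := F.hα h2
    subst hk2
    exact F.hdisj (p i) (p i) (h3.symm.trans (hgp i hχ))
  · rw [h3] at h2
    exact F.hdisj (p i) k h2

theorem ma_ne (F : Frame α β p q) (g : Equiv.Perm Ω) (χ : ℤ → Prop) (hgo : ∀ k, g (α k) = α k ∨ g (α k) = β k)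
    (hgp' : ∀ i, ¬χ i → g (α (p i)) = α (p i)) {i : ℤ} (hχ : ¬χ i) (k : ℕ) :
    g⁻¹ (β (p i)) ≠ α k := by
  intro hk
  have h2 : β (p i) = g (α k) := by
    conv_lhs => rw [← Equiv.Perm.apply_inv_self g (β (p i))]
    rw [hk]
  rcases hgo k with h3 | h3
  · rw [h3] at h2
    exact F.hdisj k (p i) h2.symm
  · rw [h3] at h2
    have hk2 : p i = k := F.hβ h2
    subst hk2
    exact F.hdisj (p i) (p i) ((hgp' i hχ).symm.trans h3)

theorem mb_ne (F : Frame α β p q) (g : Equiv.Perm Ω) (hgo : ∀ k, g (α k) = α k ∨ g (α k) = β k)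
    (hgq : ∀ i, g (α (q i)) = α (q i)) (i : ℤ) (k : ℕ) :
    g⁻¹ (β (q i)) ≠ α k := by
  intro hk
  have h2 : β (q i) = g (α k) := by
    conv_lhs => rw [← Equiv.Perm.apply_inv_self g (β (q i))]
    rw [hk]
  rcases hgo k with h3 | h3
  · rw [h3] at h2
    exact F.hdisj k (q i) h2.symm
  · rw [h3] at h2
    have hk2 : q i = k := F.hβ h2
    subst hk2
    exact F.hdisj (q i) (q i) ((hgq i).symm.trans h3)

variable (F : Frame α β p q) (g : Equiv.Perm Ω) (χ : ℤ → Prop)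
variable (hgp : ∀ i, χ i → g (α (p i)) = β (p i))
variable (hgp' : ∀ i, ¬χ i → g (α (p i)) = α (p i))
variable (hgq : ∀ i, g (α (q i)) = α (q i))
variable (hgo : ∀ k, g (α k) = α k ∨ g (α k) = β k)

include hgp hgp' hgq hgo in
theorem Rw_a {i : ℤ} (hχ : χ i) : Rw F g (α (p i)) = α (q i) := by
  have h1 : e2P F (α (p i)) = α (q i) := e2P_a F i
  have h2 : Dw F g (α (q i)) = g⁻¹ (α (p i)) := by
    conv_lhs => rw [← ginv_q F g hgq i]
    exact Dw_nb F g i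
  have h3 : e2P F (g⁻¹ (α (p i))) = g⁻¹ (α (p i)) :=
    e2P_fix F (fun k => Ne.symm (na_ne F g χ hgo hgp hχ (p k)))
      (fun k => Ne.symm (na_ne F g χ hgo hgp hχ (q k)))
  have h4 : Dw F g (g⁻¹ (α (p i))) = α (q i) := by
    rw [Dw_na F g i, ginv_q F g hgq i]
  simp only [Rw, Equiv.Perm.mul_apply]
  rw [h1, h2, h3, h4]

include hgp hgp' hgq hgo in
theorem Rw_b {i : ℤ} (hχ : χ i) : Rw F g (α (q i)) = α (p i) := by
  have h1 : e2P F (α (q i)) = α (p i) := e2P_b F i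
  have h2 : Dw F g (α (p i)) = g⁻¹ (β (q i)) := by
    conv_lhs => rw [← ginv_p F g χ hgp hχ]
    exact Dw_ma F g i
  have h3 : e2P F (g⁻¹ (β (q i))) = g⁻¹ (β (q i)) :=
    e2P_fix F (fun k => Ne.symm (mb_ne F g hgo hgq i (p k)))
      (fun k => Ne.symm (mb_ne F g hgo hgq i (q k)))
  have h4 : Dw F g (g⁻¹ (β (q i))) = α (p i) := by
    rw [Dw_mb F g i, ginv_p F g χ hgp hχ]
  simp only [Rw, Equiv.Perm.mul_apply]
  rw [h1, h2, h3, h4]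

include hgp hgp' hgq hgo in
theorem Rw_z1 {i : ℤ} (hχ : χ i) : Rw F g (g⁻¹ (α (p i))) = g⁻¹ (β (q i)) := by
  have h1 : e2P F (g⁻¹ (α (p i))) = g⁻¹ (α (p i)) :=
    e2P_fix F (fun k => Ne.symm (na_ne F g χ hgo hgp hχ (p k)))
      (fun k => Ne.symm (na_ne F g χ hgo hgp hχ (q k)))
  have h2 : Dw F g (g⁻¹ (α (p i))) = α (q i) := by
    rw [Dw_na F g i, ginv_q F g hgq i]
  have h3 : e2P F (α (q i)) = α (p i) := e2P_b F i
  have h4 : Dw F g (α (p i)) = g⁻¹ (β (q i)) := by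
    conv_lhs => rw [← ginv_p F g χ hgp hχ]
    exact Dw_ma F g i
  simp only [Rw, Equiv.Perm.mul_apply]
  rw [h1, h2, h3, h4]

include hgp hgp' hgq hgo in
theorem Rw_z2 {i : ℤ} (hχ : χ i) : Rw F g (g⁻¹ (β (q i))) = g⁻¹ (α (p i)) := by
  have h1 : e2P F (g⁻¹ (β (q i))) = g⁻¹ (β (q i)) :=
    e2P_fix F (fun k => Ne.symm (mb_ne F g hgo hgq i (p k)))
      (fun k => Ne.symm (mb_ne F g hgo hgq i (q k)))
  have h2 : Dw F g (g⁻¹ (β (q i))) = α (p i) := by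
    rw [Dw_mb F g i, ginv_p F g χ hgp hχ]
  have h3 : e2P F (α (p i)) = α (q i) := e2P_a F i
  have h4 : Dw F g (α (q i)) = g⁻¹ (α (p i)) := by
    conv_lhs => rw [← ginv_q F g hgq i]
    exact Dw_nb F g i
  simp only [Rw, Equiv.Perm.mul_apply]
  rw [h1, h2, h3, h4]

include hgp hgp' hgq hgo in
theorem Rw_a' {i : ℤ} (hχ : ¬χ i) : Rw F g (α (p i)) = α (p i) := by
  have h1 : e2P F (α (p i)) = α (q i) := e2P_a F i
  have h2 : Dw F g (α (q i)) = α (p i) := by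
    conv_lhs => rw [← ginv_q F g hgq i]
    rw [Dw_nb F g i, ginv_p' F g χ hgp' hχ]
  have h4 : Dw F g (α (q i)) = α (p i) := h2
  simp only [Rw, Equiv.Perm.mul_apply]
  rw [h1, h2, h1, h4]

include hgp hgp' hgq hgo in
theorem Rw_b' {i : ℤ} (hχ : ¬χ i) : Rw F g (α (q i)) = α (q i) := by
  have h1 : e2P F (α (q i)) = α (p i) := e2P_b F i
  have h2 : Dw F g (α (p i)) = α (q i) := by
    conv_lhs => rw [← ginv_p' F g χ hgp' hχ]
    rw [Dw_na F g i, ginv_q F g hgq i]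
  simp only [Rw, Equiv.Perm.mul_apply]
  rw [h1, h2, h1, h2]

include hgp hgp' hgq hgo in
theorem Rw_z3 {i : ℤ} (hχ : ¬χ i) : Rw F g (g⁻¹ (β (p i))) = g⁻¹ (β (p i)) := by
  have h1 : e2P F (g⁻¹ (β (p i))) = g⁻¹ (β (p i)) :=
    e2P_fix F (fun k => Ne.symm (ma_ne F g χ hgo hgp' hχ (p k)))
      (fun k => Ne.symm (ma_ne F g χ hgo hgp' hχ (q k)))
  have h2 : Dw F g (g⁻¹ (β (p i))) = g⁻¹ (β (q i)) := Dw_ma F g i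
  have h3 : e2P F (g⁻¹ (β (q i))) = g⁻¹ (β (q i)) :=
    e2P_fix F (fun k => Ne.symm (mb_ne F g hgo hgq i (p k)))
      (fun k => Ne.symm (mb_ne F g hgo hgq i (q k)))
  have h4 : Dw F g (g⁻¹ (β (q i))) = g⁻¹ (β (p i)) := Dw_mb F g i
  simp only [Rw, Equiv.Perm.mul_apply]
  rw [h1, h2, h3, h4]

include hgp hgp' hgq hgo in
theorem Rw_z4 {i : ℤ} (hχ : ¬χ i) : Rw F g (g⁻¹ (β (q i))) = g⁻¹ (β (q i)) := by
  have h1 : e2P F (g⁻¹ (β (q i))) = g⁻¹ (β (q i)) :=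
    e2P_fix F (fun k => Ne.symm (mb_ne F g hgo hgq i (p k)))
      (fun k => Ne.symm (mb_ne F g hgo hgq i (q k)))
  have h2 : Dw F g (g⁻¹ (β (q i))) = g⁻¹ (β (p i)) := Dw_mb F g i
  have h3 : e2P F (g⁻¹ (β (p i))) = g⁻¹ (β (p i)) :=
    e2P_fix F (fun k => Ne.symm (ma_ne F g χ hgo hgp' hχ (p k)))
      (fun k => Ne.symm (ma_ne F g χ hgo hgp' hχ (q k)))
  have h4 : Dw F g (g⁻¹ (β (p i))) = g⁻¹ (β (q i)) := Dw_ma F g i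
  simp only [Rw, Equiv.Perm.mul_apply]
  rw [h1, h2, h3, h4]

include hgp hgp' hgq hgo in
theorem Rw_fix {x : Ω}
    (h1 : ∀ i : ℤ, g⁻¹ (α (p i)) ≠ x) (h2 : ∀ i : ℤ, g⁻¹ (α (q i)) ≠ x)
    (h3 : ∀ i : ℤ, g⁻¹ (β (p i)) ≠ x) (h4 : ∀ i : ℤ, g⁻¹ (β (q i)) ≠ x) :
    Rw F g x = x := by
  have hA : ∀ k : ℕ, α k ≠ x := by
    intro k hk
    rcases hgo k with h5 | h5
    · have : g⁻¹ (α k) = x := by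
        rw [← h5, Equiv.Perm.inv_apply_self, hk]
      rcases F.hcover k with ⟨i, rfl⟩ | ⟨i, rfl⟩
      · exact h1 i this
      · exact h2 i this
    · have : g⁻¹ (β k) = x := by
        rw [← h5, Equiv.Perm.inv_apply_self, hk]
      rcases F.hcover k with ⟨i, rfl⟩ | ⟨i, rfl⟩
      · exact h3 i this
      · exact h4 i this
  have he : e2P F x = x := e2P_fix F (fun k => hA (p k)) (fun k => hA (q k))
  have hD : Dw F g x = x := Dw_fix F g h1 h2 h3 h4
  simp only [Rw, Equiv.Perm.mul_apply]
  rw [he, hD, he, hD]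

end RSpec
section Core

theorem core_word (F : Frame α β p q) (g : Equiv.Perm Ω) (χ : ℤ → Prop)
    (hgp : ∀ i, χ i → g (α (p i)) = β (p i))
    (hgp' : ∀ i, ¬χ i → g (α (p i)) = α (p i))
    (hgq : ∀ i, g (α (q i)) = α (q i))
    (hgo : ∀ k, g (α k) = α k ∨ g (α k) = β k)
    (f' : Equiv.Perm Ω)
    (hfa : ∀ i : ℤ, f' (α (p i)) = α (p i) ∨ f' (α (p i)) = α (q i))
    (hfb : ∀ i : ℤ, f' (α (q i)) = α (p i) ∨ f' (α (q i)) = α (q i))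
    (hffix : ∀ x : Ω, (∀ i : ℤ, α (p i) ≠ x) → (∀ i : ℤ, α (q i) ≠ x) → f' x = x)
    (hT : ∀ i : ℤ, (f' (α (p i)) = α (q i)) ↔ ¬(χ i ↔ χ (i + 1))) :
    f' = Fw F g := by
  apply Equiv.ext
  intro x
  simp only [Fw, Equiv.Perm.mul_apply]
  by_cases hxa : ∃ i, α (p i) = x
  · obtain ⟨i, rfl⟩ := hxa
    rw [shP_a F i]
    by_cases h1 : χ i <;> by_cases h2 : χ (i + 1)
    · rw [Rw_a F g χ hgp hgp' hgq hgo h2]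
      have hsi : (shP F)⁻¹ (α (q (i + 1))) = α (q i) := by
        conv_lhs => rw [← shP_b F i]
        exact Equiv.Perm.inv_apply_self _ _
      rw [hsi, Rw_b F g χ hgp hgp' hgq hgo h1]
      have hne : f' (α (p i)) ≠ α (q i) := fun hc =>
        ((hT i).mp hc) (iff_of_true h1 h2)
      rcases hfa i with h | h
      · exact h
      · exact absurd h hne
    · rw [Rw_a' F g χ hgp hgp' hgq hgo h2]
      have hsi : (shP F)⁻¹ (α (p (i + 1))) = α (p i) := by
        conv_lhs => rw [← shP_a F i]
        exact Equiv.Perm.inv_apply_self _ _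
      rw [hsi, Rw_a F g χ hgp hgp' hgq hgo h1]
      exact (hT i).mpr fun hiff => h2 (hiff.mp h1)
    · rw [Rw_a F g χ hgp hgp' hgq hgo h2]
      have hsi : (shP F)⁻¹ (α (q (i + 1))) = α (q i) := by
        conv_lhs => rw [← shP_b F i]
        exact Equiv.Perm.inv_apply_self _ _
      rw [hsi, Rw_b' F g χ hgp hgp' hgq hgo h1]
      exact (hT i).mpr fun hiff => h1 (hiff.mpr h2)
    · rw [Rw_a' F g χ hgp hgp' hgq hgo h2]
      have hsi : (shP F)⁻¹ (α (p (i + 1))) = α (p i) := by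
        conv_lhs => rw [← shP_a F i]
        exact Equiv.Perm.inv_apply_self _ _
      rw [hsi, Rw_a' F g χ hgp hgp' hgq hgo h1]
      have hne : f' (α (p i)) ≠ α (q i) := fun hc =>
        ((hT i).mp hc) (iff_of_false h1 h2)
      rcases hfa i with h | h
      · exact h
      · exact absurd h hne
  · by_cases hxb : ∃ i, α (q i) = x
    · obtain ⟨i, rfl⟩ := hxb
      rw [shP_b F i]
      by_cases h1 : χ i <;> by_cases h2 : χ (i + 1)
      · rw [Rw_b F g χ hgp hgp' hgq hgo h2]
        have hsi : (shP F)⁻¹ (α (p (i + 1))) = α (p i) := by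
          conv_lhs => rw [← shP_a F i]
          exact Equiv.Perm.inv_apply_self _ _
        rw [hsi, Rw_a F g χ hgp hgp' hgq hgo h1]
        -- i ∉ T : f' (α (p i)) = α (p i), so f' (α (q i)) = α (q i)
        have hfp : f' (α (p i)) = α (p i) := by
          rcases hfa i with h | h
          · exact h
          · exact absurd h fun hc => ((hT i).mp h) (iff_of_true h1 h2)
        rcases hfb i with h | h
        · exfalso
          exact F.hab i i (f'.injective (hfp.trans h.symm))
        · exact h
      · rw [Rw_b' F g χ hgp hgp' hgq hgo h2]
        have hsi : (shP F)⁻¹ (α (q (i + 1))) = α (q i) := by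
          conv_lhs => rw [← shP_b F i]
          exact Equiv.Perm.inv_apply_self _ _
        rw [hsi, Rw_b F g χ hgp hgp' hgq hgo h1]
        have hfp : f' (α (p i)) = α (q i) := (hT i).mpr fun hiff => h2 (hiff.mp h1)
        rcases hfb i with h | h
        · exact h
        · exfalso
          exact F.hab i i (f'.injective (hfp.trans h.symm))
      · rw [Rw_b F g χ hgp hgp' hgq hgo h2]
        have hsi : (shP F)⁻¹ (α (p (i + 1))) = α (p i) := by
          conv_lhs => rw [← shP_a F i]
          exact Equiv.Perm.inv_apply_self _ _
        rw [hsi, Rw_a' F g χ hgp hgp' hgq hgo h1]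
        have hfp : f' (α (p i)) = α (q i) := (hT i).mpr fun hiff => h1 (hiff.mpr h2)
        rcases hfb i with h | h
        · exact h
        · exfalso
          exact F.hab i i (f'.injective (hfp.trans h.symm))
      · rw [Rw_b' F g χ hgp hgp' hgq hgo h2]
        have hsi : (shP F)⁻¹ (α (q (i + 1))) = α (q i) := by
          conv_lhs => rw [← shP_b F i]
          exact Equiv.Perm.inv_apply_self _ _
        rw [hsi, Rw_b' F g χ hgp hgp' hgq hgo h1]
        have hfp : f' (α (p i)) = α (p i) := by
          rcases hfa i with h | h
          · exact h
          · exact absurd h fun hc => ((hT i).mp h) (iff_of_false h1 h2)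
        rcases hfb i with h | h
        · exfalso
          exact F.hab i i (f'.injective (hfp.trans h.symm))
        · exact h
    · push_neg at hxa hxb
      by_cases hxc : ∃ i, g⁻¹ (α (p i)) = x
      · obtain ⟨i, rfl⟩ := hxc
        have h1 : χ i := by
          by_contra h1
          exact hxa i (ginv_p' F g χ hgp' h1).symm
        have hnab : ∀ k : ℕ, α k ≠ g⁻¹ (α (p i)) :=
          fun k => Ne.symm (na_ne F g χ hgo hgp h1 k)
        have hs : shP F (g⁻¹ (α (p i))) = g⁻¹ (α (p i)) :=
          shP_fix F (fun k => hnab (p k)) (fun k => hnab (q k))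
        have hsinv : (shP F)⁻¹ (g⁻¹ (β (q i))) = g⁻¹ (β (q i)) := by
          have hnab2 : ∀ k : ℕ, α k ≠ g⁻¹ (β (q i)) :=
            fun k => Ne.symm (mb_ne F g hgo hgq i k)
          have := shP_fix F (x := g⁻¹ (β (q i))) (fun k => hnab2 (p k)) (fun k => hnab2 (q k))
          conv_lhs => rw [← this]
          exact Equiv.Perm.inv_apply_self _ _
        rw [hs, Rw_z1 F g χ hgp hgp' hgq hgo h1, hsinv,
          Rw_z2 F g χ hgp hgp' hgq hgo h1]
        exact hffix _ (fun k => hnab (p k)) (fun k => hnab (q k))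
      · by_cases hxd : ∃ i, g⁻¹ (β (p i)) = x
        · obtain ⟨i, rfl⟩ := hxd
          have h1 : ¬χ i := by
            intro h1
            exact hxa i (ginv_p F g χ hgp h1).symm
          have hnab : ∀ k : ℕ, α k ≠ g⁻¹ (β (p i)) :=
            fun k => Ne.symm (ma_ne F g χ hgo hgp' h1 k)
          have hs : shP F (g⁻¹ (β (p i))) = g⁻¹ (β (p i)) :=
            shP_fix F (fun k => hnab (p k)) (fun k => hnab (q k))
          have hsinv : (shP F)⁻¹ (g⁻¹ (β (p i))) = g⁻¹ (β (p i)) := by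
            conv_lhs => rw [← hs]
            exact Equiv.Perm.inv_apply_self _ _
          rw [hs, Rw_z3 F g χ hgp hgp' hgq hgo h1, hsinv,
            Rw_z3 F g χ hgp hgp' hgq hgo h1]
          exact hffix _ (fun k => hnab (p k)) (fun k => hnab (q k))
        · by_cases hxe : ∃ i, g⁻¹ (β (q i)) = x
          · obtain ⟨i, rfl⟩ := hxe
            have hnab : ∀ k : ℕ, α k ≠ g⁻¹ (β (q i)) :=
              fun k => Ne.symm (mb_ne F g hgo hgq i k)
            have hs : shP F (g⁻¹ (β (q i))) = g⁻¹ (β (q i)) :=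
              shP_fix F (fun k => hnab (p k)) (fun k => hnab (q k))
            have hfix : f' (g⁻¹ (β (q i))) = g⁻¹ (β (q i)) :=
              hffix _ (fun k => hnab (p k)) (fun k => hnab (q k))
            by_cases h1 : χ i
            · have hnab2 : ∀ k : ℕ, α k ≠ g⁻¹ (α (p i)) :=
                fun k => Ne.symm (na_ne F g χ hgo hgp h1 k)
              have hsinv : (shP F)⁻¹ (g⁻¹ (α (p i))) = g⁻¹ (α (p i)) := by
                have := shP_fix F (x := g⁻¹ (α (p i))) (fun k => hnab2 (p k))
                  (fun k => hnab2 (q k))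
                conv_lhs => rw [← this]
                exact Equiv.Perm.inv_apply_self _ _
              rw [hs, Rw_z2 F g χ hgp hgp' hgq hgo h1, hsinv,
                Rw_z1 F g χ hgp hgp' hgq hgo h1]
              exact hfix
            · have hsinv : (shP F)⁻¹ (g⁻¹ (β (q i))) = g⁻¹ (β (q i)) := by
                conv_lhs => rw [← hs]
                exact Equiv.Perm.inv_apply_self _ _
              rw [hs, Rw_z4 F g χ hgp hgp' hgq hgo h1, hsinv,
                Rw_z4 F g χ hgp hgp' hgq hgo h1]
              exact hfix
          · push_neg at hxc hxd hxe
            have hrf : ∀ y : Ω, (∀ i : ℤ, g⁻¹ (α (p i)) ≠ y) → (∀ i : ℤ, α (q i) ≠ y) →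
                (∀ i : ℤ, g⁻¹ (β (p i)) ≠ y) → (∀ i : ℤ, g⁻¹ (β (q i)) ≠ y) →
                Rw F g y = y := by
              intro y k1 k2 k3 k4
              refine Rw_fix F g χ hgp hgp' hgq hgo k1 ?_ k3 k4
              intro i
              rw [ginv_q F g hgq i]
              exact k2 i
            have hs : shP F x = x := shP_fix F hxa hxb
            have hsinv : (shP F)⁻¹ x = x := by
              conv_lhs => rw [← hs]
              exact Equiv.Perm.inv_apply_self _ _
            rw [hs, hrf x hxc hxb hxd hxe, hsinv, hrf x hxc hxb hxd hxe]
            exact hffix x hxa hxb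

end Core
section Chi

theorem exists_chi (T : Set ℤ) : ∃ χ : ℤ → Prop, ∀ i : ℤ, i ∈ T ↔ ¬(χ i ↔ χ (i + 1)) := by
  classical
  let cp : ℕ → Prop := fun n => Nat.rec False (fun m ih => ¬(ih ↔ (Int.ofNat m ∈ T))) n
  let cm : ℕ → Prop := fun n =>
    Nat.rec (Int.negSucc 0 ∈ T) (fun m ih => ¬(ih ↔ (Int.negSucc (m + 1) ∈ T))) n
  refine ⟨fun i => match i with | Int.ofNat n => cp n | Int.negSucc n => cm n, ?_⟩
  intro i
  match i with
  | Int.ofNat n =>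
    have h1 : Int.ofNat n + 1 = Int.ofNat (n + 1) := rfl
    rw [h1]
    show (Int.ofNat n ∈ T) ↔ ¬(cp n ↔ ¬(cp n ↔ (Int.ofNat n ∈ T)))
    rcases Classical.em (cp n) with hA | hA <;>
      rcases Classical.em (Int.ofNat n ∈ T) with hB | hB <;> simp [hA, hB]
  | Int.negSucc n =>
    cases n with
    | zero =>
      have h1 : Int.negSucc 0 + 1 = Int.ofNat 0 := rfl
      rw [h1]
      show (Int.negSucc 0 ∈ T) ↔ ¬((Int.negSucc 0 ∈ T) ↔ False)
      rcases Classical.em (Int.negSucc 0 ∈ T) with hB | hB <;> simp [hB]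
    | succ m =>
      have h1 : Int.negSucc (m + 1) + 1 = Int.negSucc m := rfl
      rw [h1]
      show (Int.negSucc (m + 1) ∈ T) ↔ ¬(¬(cm m ↔ (Int.negSucc (m + 1) ∈ T)) ↔ cm m)
      rcases Classical.em (cm m) with hA | hA <;>
        rcases Classical.em (Int.negSucc (m + 1) ∈ T) with hB | hB <;> simp [hA, hB]

end Chi

section TP

theorem pair_eq {S : Set Ω} (hS : S.encard = 2) {x y : Ω}
    (hx : x ∈ S) (hy : y ∈ S) (hxy : x ≠ y) : S = {x, y} := by
  obtain ⟨u, v, huv, rfl⟩ := Set.encard_eq_two.mp hS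
  rcases hx with rfl | rfl <;> rcases hy with rfl | rfl
  · exact absurd rfl hxy
  · rfl
  · exact Set.pair_comm _ _
  · exact absurd rfl hxy

theorem exists_tp [Countable Ω] (F : Frame α β p q) (A₀ : Set (Set Ω))
    (hpart : (∀ s ∈ A₀, s.Nonempty) ∧ A₀.PairwiseDisjoint id ∧ ⋃₀ A₀ = Set.univ)
    (h1 : {s | s ∈ A₀ ∧ s.encard = 1}.Infinite)
    (h2 : {s | s ∈ A₀ ∧ s.encard = 2}.Infinite) :
    ∃ t : Equiv.Perm Ω,
      (∀ i : ℤ, ∃ S ∈ A₀, S.encard = 2 ∧ t (α (p i)) ∈ S ∧ t (α (q i)) ∈ S) ∧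
      (∀ x : Ω, (∀ i : ℤ, α (p i) ≠ x) → (∀ i : ℤ, α (q i) ≠ x) →
        ∀ S ∈ A₀, S.encard = 2 → t x ∉ S) := by
  classical
  set P2 := {s | s ∈ A₀ ∧ s.encard = 2} with hP2
  have hP2mem : ∀ S : P2, (S : Set Ω) ∈ A₀ ∧ (S : Set Ω).encard = 2 := fun S => S.2
  -- choice of the two elements of each 2-block
  have hpick : ∀ S : P2, ∃ xy : Ω × Ω, xy.1 ≠ xy.2 ∧ (S : Set Ω) = {xy.1, xy.2} := by
    rintro S
    obtain ⟨x, y, hxy, hxyeq⟩ := Set.encard_eq_two.mp (hP2mem S).2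
    exact ⟨(x, y), hxy, hxyeq⟩
  choose xy hne hset using hpick
  set σ1 : P2 → Ω := fun S => (xy S).1 with hσ1
  set σ2 : P2 → Ω := fun S => (xy S).2 with hσ2
  have hσ1mem : ∀ S : P2, σ1 S ∈ (S : Set Ω) := fun S => by
    rw [hset S]; exact Set.mem_insert _ _
  have hσ2mem : ∀ S : P2, σ2 S ∈ (S : Set Ω) := fun S => by
    rw [hset S]; exact Set.mem_insert_of_mem _ rfl
  -- disjointness of distinct blocks
  have hdisjblocks : ∀ (S S' : P2) (x : Ω), x ∈ (S : Set Ω) → x ∈ (S' : Set Ω) → S = S' := by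
    rintro S S' x hx hx'
    refine Subtype.ext ?_
    by_contra hne'
    have hd : Disjoint (S : Set Ω) (S' : Set Ω) :=
      hpart.2.1 (hP2mem S).1 (hP2mem S').1 hne'
    exact Set.disjoint_left.mp hd hx hx'
  -- P2 is countably infinite
  have hcount : Countable P2 := by
    have hinj : Function.Injective σ1 := by
      intro S S' hSS'
      exact hdisjblocks S S' (σ1 S) (hσ1mem S) (hSS' ▸ hσ1mem S')
    exact hinj.countable
  have hinf : Infinite P2 := Set.infinite_coe_iff.mpr h2
  obtain ⟨φ⟩ : Nonempty (ℤ ≃ P2) := nonempty_equiv_of_countable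
  -- the two sets to be matched
  set Sab : Set Ω := Set.range (fun i : ℤ => α (p i)) ∪ Set.range (fun i : ℤ => α (q i))
    with hSab
  set T0 : Set Ω := {x | ∃ S ∈ A₀, S.encard = 2 ∧ x ∈ S} with hT0
  have hσ1T0 : ∀ S : P2, σ1 S ∈ T0 := fun S =>
    ⟨(S : Set Ω), (hP2mem S).1, (hP2mem S).2, hσ1mem S⟩
  have hσ2T0 : ∀ S : P2, σ2 S ∈ T0 := fun S =>
    ⟨(S : Set Ω), (hP2mem S).1, (hP2mem S).2, hσ2mem S⟩
  -- core bijections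
  have hfS : ∀ z : ℤ × Bool, (if z.2 then α (q z.1) else α (p z.1)) ∈ Sab := by
    rintro ⟨i, (_|_)⟩
    · exact Or.inl ⟨i, rfl⟩
    · exact Or.inr ⟨i, rfl⟩
  set fS : ℤ × Bool → Sab := fun z => ⟨if z.2 then α (q z.1) else α (p z.1), hfS z⟩
    with hfSdef
  have hfSbij : Function.Bijective fS := by
    constructor
    · rintro ⟨i, bi⟩ ⟨j, bj⟩ hij
      have h := congrArg Subtype.val hij
      simp only [hfSdef] at h
      cases bi <;> cases bj <;> simp at h <;>
        first
          | (exact absurd h (F.hab _ _))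
          | (exact absurd h (Ne.symm (F.hab _ _)))
          | (exact Prod.ext (by first | exact F.hp (F.hα h) | exact F.hq (F.hα h)) rfl)
    · rintro ⟨x, hx⟩
      rcases hx with ⟨i, hi⟩ | ⟨i, hi⟩
      · exact ⟨(i, false), Subtype.ext (by simpa [hfSdef] using hi)⟩
      · exact ⟨(i, true), Subtype.ext (by simpa [hfSdef] using hi)⟩
  set fT : ℤ × Bool → T0 := fun z =>
    ⟨if z.2 then σ2 (φ z.1) else σ1 (φ z.1), by
      rcases z with ⟨i, b⟩
      cases b
      · simpa using hσ1T0 (φ i)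
      · simpa using hσ2T0 (φ i)⟩ with hfTdef
  have hfTbij : Function.Bijective fT := by
    constructor
    · rintro ⟨i, bi⟩ ⟨j, bj⟩ hij
      have h := congrArg Subtype.val hij
      simp only [hfTdef] at h
      cases bi <;> cases bj <;> simp at h
      · have hb := hdisjblocks (φ i) (φ j) _ (hσ1mem (φ i)) (h ▸ hσ1mem (φ j))
        exact Prod.ext (φ.injective hb) rfl
      · have hb := hdisjblocks (φ i) (φ j) _ (hσ1mem (φ i)) (h ▸ hσ2mem (φ j))
        rw [hb] at h
        exact absurd h (hne (φ j))
      · have hb := hdisjblocks (φ i) (φ j) _ (hσ2mem (φ i)) (h ▸ hσ1mem (φ j))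
        rw [hb] at h
        exact absurd h.symm (hne (φ j))
      · have hb := hdisjblocks (φ i) (φ j) _ (hσ2mem (φ i)) (h ▸ hσ2mem (φ j))
        exact Prod.ext (φ.injective hb) rfl
    · rintro ⟨x, hx⟩
      obtain ⟨S, hS, hS2, hxS⟩ := hx
      have hxS' : x ∈ ((⟨S, hS, hS2⟩ : P2) : Set Ω) := hxS
      rw [hset ⟨S, hS, hS2⟩] at hxS'
      rcases hxS' with rfl | rfl
      · refine ⟨(φ.symm ⟨S, hS, hS2⟩, false), Subtype.ext ?_⟩
        simp [hfTdef, hσ1, Equiv.apply_symm_apply]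
      · refine ⟨(φ.symm ⟨S, hS, hS2⟩, true), Subtype.ext ?_⟩
        simp [hfTdef, hσ2, Equiv.apply_symm_apply]
  -- complements are countably infinite
  have hcSab : Infinite (Sabᶜ : Set Ω) := by
    rw [Set.infinite_coe_iff]
    refine Set.infinite_of_injective_forall_mem (f := β) F.hβ ?_
    intro k
    rintro (⟨i, hi⟩ | ⟨i, hi⟩)
    · exact F.hdisj (p i) k hi
    · exact F.hdisj (q i) k hi
  have hcT0 : Infinite (T0ᶜ : Set Ω) := by
    rw [Set.infinite_coe_iff]
    have h1' : Infinite {s | s ∈ A₀ ∧ s.encard = 1} := Set.infinite_coe_iff.mpr h1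
    have hP1mem : ∀ S : {s | s ∈ A₀ ∧ s.encard = 1},
        (S : Set Ω) ∈ A₀ ∧ (S : Set Ω).encard = 1 := fun S => S.2
    have hpick1 : ∀ S : {s | s ∈ A₀ ∧ s.encard = 1}, ∃ x : Ω, (S : Set Ω) = {x} :=
      fun S => Set.encard_eq_one.mp (hP1mem S).2
    choose u hu using hpick1
    refine Set.infinite_of_injective_forall_mem (f := u) ?_ ?_
    · intro S S' hSS'
      refine Subtype.ext ?_
      rw [hu S, hu S', hSS']
    · intro S hmem
      obtain ⟨S2, hS2A, hS2two, hS2x⟩ := hmem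
      have hne12 : (S : Set Ω) ≠ S2 := by
        intro hC
        rw [← hC, (hP1mem S).2] at hS2two
        exact absurd hS2two (by norm_num)
      have huS : u S ∈ (S : Set Ω) := by rw [hu S]; exact rfl
      have hd : Disjoint (S : Set Ω) S2 := hpart.2.1 (hP1mem S).1 hS2A hne12
      exact Set.disjoint_left.mp hd huS hS2x
  obtain ⟨eC⟩ : Nonempty ((Sabᶜ : Set Ω) ≃ (T0ᶜ : Set Ω)) := nonempty_equiv_of_countable
  set eCore : (Sab : Set Ω) ≃ (T0 : Set Ω) :=
    (Equiv.ofBijective fS hfSbij).symm.trans (Equiv.ofBijective fT hfTbij) with heCore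
  set t : Equiv.Perm Ω :=
    (Equiv.Set.sumCompl Sab).symm.trans ((Equiv.sumCongr eCore eC).trans
      (Equiv.Set.sumCompl T0)) with ht
  have hta : ∀ i : ℤ, t (α (p i)) = σ1 (φ i) := by
    intro i
    have hmem : α (p i) ∈ Sab := Or.inl ⟨i, rfl⟩
    have e1 : (Equiv.Set.sumCompl Sab).symm (α (p i)) = Sum.inl ⟨α (p i), hmem⟩ :=
      Equiv.Set.sumCompl_symm_apply_of_mem hmem
    have e2 : (Equiv.ofBijective fS hfSbij).symm ⟨α (p i), hmem⟩ = (i, false) := by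
      rw [Equiv.symm_apply_eq]
      exact Subtype.ext (by simp [hfSdef])
    rw [ht]
    simp only [Equiv.trans_apply, e1, Equiv.sumCongr_apply, Sum.map_inl, heCore,
      Equiv.trans_apply, e2, Equiv.Set.sumCompl_apply_inl]
    simp [hfTdef]
  have htb : ∀ i : ℤ, t (α (q i)) = σ2 (φ i) := by
    intro i
    have hmem : α (q i) ∈ Sab := Or.inr ⟨i, rfl⟩
    have e1 : (Equiv.Set.sumCompl Sab).symm (α (q i)) = Sum.inl ⟨α (q i), hmem⟩ :=
      Equiv.Set.sumCompl_symm_apply_of_mem hmem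
    have e2 : (Equiv.ofBijective fS hfSbij).symm ⟨α (q i), hmem⟩ = (i, true) := by
      rw [Equiv.symm_apply_eq]
      exact Subtype.ext (by simp [hfSdef])
    rw [ht]
    simp only [Equiv.trans_apply, e1, Equiv.sumCongr_apply, Sum.map_inl, heCore,
      Equiv.trans_apply, e2, Equiv.Set.sumCompl_apply_inl]
    simp [hfTdef]
  refine ⟨t, ?_, ?_⟩
  · intro i
    refine ⟨((φ i : P2) : Set Ω), (hP2mem (φ i)).1, (hP2mem (φ i)).2, ?_, ?_⟩
    · rw [hta i]; exact hσ1mem (φ i)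
    · rw [htb i]; exact hσ2mem (φ i)
  · intro x hxp hxq S hS hS2 hmem
    have hxc : x ∈ Sabᶜ := by
      rintro (⟨i, hi⟩ | ⟨i, hi⟩)
      · exact hxp i hi
      · exact hxq i hi
    have e1 : (Equiv.Set.sumCompl Sab).symm x = Sum.inr ⟨x, hxc⟩ :=
      Equiv.Set.sumCompl_symm_apply_of_notMem hxc
    have hout : t x ∈ T0ᶜ := by
      rw [ht]
      simp only [Equiv.trans_apply, e1, Equiv.sumCongr_apply, Sum.map_inr,
        Equiv.Set.sumCompl_apply_inr]
      exact (eC ⟨x, hxc⟩).2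
    exact hout ⟨S, hS, hS2, hmem⟩

end TP
end BSaux


/-- Lemma 7.1. -/
theorem stmt12 {Ω : Type u} [Countable Ω] [Infinite Ω] (G : Subgroup (Equiv.Perm Ω))
    (α β : ℕ → Ω) (hα : Function.Injective α) (hβ : Function.Injective β)
    (hdisj : ∀ i j : ℕ, α i ≠ β j)
    (h : ∀ γ : ℕ → Ω, (∀ i, γ i = α i ∨ γ i = β i) → ∃ g ∈ G, ∀ i, γ i = g (α i))
    (A₀ : Set (Set Ω)) (hpart : IsPartition A₀)
    (h1 : {s | s ∈ A₀ ∧ s.encard = 1}.Infinite)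
    (h2 : {s | s ∈ A₀ ∧ s.encard = 2}.Infinite)
    (h12 : ∀ s ∈ A₀, s.encard = 1 ∨ s.encard = 2) :
    PrecF (SAgrp A₀) G := by
  classical
  obtain ⟨hpart1, hpart2, hpart3⟩ := hpart
  let eZ : ℤ ≃ ℕ := Denumerable.eqv ℤ
  set p : ℤ → ℕ := fun i => 2 * eZ i with hpdef
  set q : ℤ → ℕ := fun i => 2 * eZ i + 1 with hqdef
  have F : BSaux.Frame α β p q := by
    refine ⟨hα, hβ, hdisj, ?_, ?_, ?_, ?_⟩
    · intro i j hij
      apply eZ.injective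
      simp only [hpdef] at hij
      omega
    · intro i j hij
      apply eZ.injective
      simp only [hqdef] at hij
      omega
    · intro i j hij
      simp only [hpdef, hqdef] at hij
      omega
    · intro k
      rcases Nat.even_or_odd k with ⟨m, hm⟩ | ⟨m, hm⟩
      · refine Or.inl ⟨eZ.symm m, ?_⟩
        simp only [hpdef, Equiv.apply_symm_apply]
        omega
      · refine Or.inr ⟨eZ.symm m, ?_⟩
        simp only [hqdef, Equiv.apply_symm_apply]
        omega
  obtain ⟨tp, htp1, htp2⟩ := BSaux.exists_tp F A₀ ⟨hpart1, hpart2, hpart3⟩ h1 h2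
  refine ⟨{BSaux.cP F, BSaux.e2P F, BSaux.shP F, tp}, ?_, ?_⟩
  · exact (((Set.finite_singleton tp).insert _).insert _).insert _
  intro f hf
  have hfim : ∀ s ∈ A₀, (⇑f) '' s = s := hf
  set f' : Equiv.Perm Ω := tp⁻¹ * f * tp with hf'def
  have hf'app : ∀ x : Ω, f' x = tp⁻¹ (f (tp x)) := fun x => rfl
  have hblock : ∀ i : ℤ, (f' (α (p i)) = α (p i) ∨ f' (α (p i)) = α (q i)) ∧
      (f' (α (q i)) = α (p i) ∨ f' (α (q i)) = α (q i)) := by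
    intro i
    obtain ⟨S, hSA, hS2, hta, htb⟩ := htp1 i
    have habq : tp (α (p i)) ≠ tp (α (q i)) := fun hc => F.hab i i (tp.injective hc)
    have hSeq : S = {tp (α (p i)), tp (α (q i))} := BSaux.pair_eq hS2 hta htb habq
    have himg : ∀ y, y ∈ S → f y ∈ S := by
      intro y hy
      have hmi := Set.mem_image_of_mem f hy
      rwa [hfim S hSA] at hmi
    constructor
    · have h3 := himg _ hta
      rw [hSeq] at h3
      simp only [Set.mem_insert_iff, Set.mem_singleton_iff] at h3
      rcases h3 with h3 | h3
      · left; rw [hf'app, h3, Equiv.Perm.inv_apply_self]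
      · right; rw [hf'app, h3, Equiv.Perm.inv_apply_self]
    · have h3 := himg _ htb
      rw [hSeq] at h3
      simp only [Set.mem_insert_iff, Set.mem_singleton_iff] at h3
      rcases h3 with h3 | h3
      · left; rw [hf'app, h3, Equiv.Perm.inv_apply_self]
      · right; rw [hf'app, h3, Equiv.Perm.inv_apply_self]
  have hffix : ∀ x : Ω, (∀ i : ℤ, α (p i) ≠ x) → (∀ i : ℤ, α (q i) ≠ x) → f' x = x := by
    intro x hxp hxq
    have hy : tp x ∈ ⋃₀ A₀ := by rw [hpart3]; trivial
    obtain ⟨S, hSA, hyS⟩ := hy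
    have hfy : f (tp x) = tp x := by
      rcases h12 S hSA with hS1 | hS2
      · obtain ⟨z, hz⟩ := Set.encard_eq_one.mp hS1
        have himg := hfim S hSA
        rw [hz, Set.image_singleton] at himg
        have hfz : f z = z := Set.singleton_eq_singleton_iff.mp himg
        have hxz : tp x = z := by rw [hz] at hyS; exact hyS
        rw [hxz, hfz]
      · exact absurd hyS (htp2 x hxp hxq S hSA hS2)
    rw [hf'app, hfy, Equiv.Perm.inv_apply_self]
  set T : Set ℤ := {i | f' (α (p i)) = α (q i)} with hTdef
  obtain ⟨χ, hχT⟩ := BSaux.exists_chi T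
  set γ : ℕ → Ω := fun k => if ∃ i : ℤ, χ i ∧ p i = k then β k else α k with hγdef
  have hγor : ∀ k, γ k = α k ∨ γ k = β k := by
    intro k
    by_cases hk : ∃ i : ℤ, χ i ∧ p i = k
    · right; simp only [hγdef, if_pos hk]
    · left; simp only [hγdef, if_neg hk]
  obtain ⟨g, hgG, hgspec⟩ := h γ hγor
  have hgp : ∀ i, χ i → g (α (p i)) = β (p i) := by
    intro i hχi
    have hex : ∃ j : ℤ, χ j ∧ p j = p i := ⟨i, hχi, rfl⟩
    rw [← hgspec (p i)]
    simp only [hγdef, if_pos hex]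
  have hgp' : ∀ i, ¬χ i → g (α (p i)) = α (p i) := by
    intro i hχi
    have hex : ¬∃ j : ℤ, χ j ∧ p j = p i := by
      rintro ⟨j, hχj, hpj⟩
      exact hχi (F.hp hpj ▸ hχj)
    rw [← hgspec (p i)]
    simp only [hγdef, if_neg hex]
  have hgq : ∀ i, g (α (q i)) = α (q i) := by
    intro i
    have hex : ¬∃ j : ℤ, χ j ∧ p j = q i := by
      rintro ⟨j, hχj, hpj⟩
      simp only [hpdef, hqdef] at hpj
      omega
    rw [← hgspec (q i)]
    simp only [hγdef, if_neg hex]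
  have hgo : ∀ k, g (α k) = α k ∨ g (α k) = β k := by
    intro k
    rcases hγor k with h' | h'
    · left; rw [← hgspec k, h']
    · right; rw [← hgspec k, h']
  have hT' : ∀ i : ℤ, (f' (α (p i)) = α (q i)) ↔ ¬(χ i ↔ χ (i + 1)) := fun i => hχT i
  have hfeq : f' = BSaux.Fw F g :=
    BSaux.core_word F g χ hgp hgp' hgq hgo f' (fun i => (hblock i).1)
      (fun i => (hblock i).2) hffix hT'
  set U : Set (Equiv.Perm Ω) := {BSaux.cP F, BSaux.e2P F, BSaux.shP F, tp} with hUdef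
  set K := Subgroup.closure ((G : Set (Equiv.Perm Ω)) ∪ U) with hKdef
  have hgK : g ∈ K := Subgroup.subset_closure (Or.inl hgG)
  have hcK : BSaux.cP F ∈ K := Subgroup.subset_closure (Or.inr (by simp [hUdef]))
  have he2K : BSaux.e2P F ∈ K := Subgroup.subset_closure (Or.inr (by simp [hUdef]))
  have hsK : BSaux.shP F ∈ K := Subgroup.subset_closure (Or.inr (by simp [hUdef]))
  have htpK : tp ∈ K := Subgroup.subset_closure (Or.inr (by simp [hUdef]))
  have hDK : BSaux.Dw F g ∈ K := by
    unfold BSaux.Dw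
    exact mul_mem (mul_mem (mul_mem (inv_mem hgK) he2K) hgK)
      (mul_mem (inv_mem hgK) (mul_mem hcK (mul_mem he2K (mul_mem hcK hgK))))
  have hRK : BSaux.Rw F g ∈ K := by
    unfold BSaux.Rw
    exact mul_mem (mul_mem hDK he2K) (mul_mem hDK he2K)
  have hFK : BSaux.Fw F g ∈ K := by
    unfold BSaux.Fw
    exact mul_mem (mul_mem hRK (inv_mem hsK)) (mul_mem hRK hsK)
  have hfinal : f = tp * f' * tp⁻¹ := by
    rw [hf'def]
    group
  show f ∈ K
  rw [hfinal, hfeq]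
  exact mul_mem (mul_mem htpK hFK) (inv_mem htpK)
end

section
/- Suppose Ω is a set and G is a subgroup of Sym(Ω) which is discrete in the function topology on Sym(Ω), and which has the property that each element of G moves only finitely many elements of Ω. Then G is finite. -/
open scoped Cardinal ENNReal

universe u

variable {Ω : Type u}

private lemma aux_discrete_sep {Ω : Type u} (G : Subgroup (Equiv.Perm Ω))
    (hdisc : FTDiscrete G) :
    ∃ I : Finset Ω, ∀ g ∈ G, (∀ a ∈ I, g a = a) → g = 1 := by
  classical
  letI τ := TopologicalSpace.induced (fun x : G => (x : Equiv.Perm Ω)) (permTop Ω)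
  haveI : @DiscreteTopology G τ := hdisc
  have hopen : @IsOpen G τ {(1 : G)} := @isOpen_discrete G τ this _
  obtain ⟨s, hs, hpre⟩ := hopen
  obtain ⟨t, ht, hpre2⟩ := hs
  have h1t : ((1 : Equiv.Perm Ω) : Ω → Ω) ∈ t := by
    have h1s : (1 : Equiv.Perm Ω) ∈ s := by
      have : (⟨1, G.one_mem⟩ : G) ∈ ((fun x : G => (x : Equiv.Perm Ω)) ⁻¹' s) := by
        rw [hpre]; rfl
      exact this
    rw [← hpre2] at h1s
    exact h1s
  rw [@isOpen_pi_iff Ω (fun _ => Ω) (fun _ => ⊥)] at ht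
  obtain ⟨I, u, hu, hsub⟩ := ht _ h1t
  refine ⟨I, fun g hg hfix => ?_⟩
  have hgt : (g : Ω → Ω) ∈ t := by
    apply hsub
    intro a ha
    rw [hfix a (by simpa using ha)]
    exact (hu a (by simpa using ha)).2
  have hgs : g ∈ s := by rw [← hpre2]; exact hgt
  have : (⟨g, hg⟩ : G) ∈ ({(1 : G)} : Set G) := by
    rw [← hpre]; exact hgs
  simpa [Subtype.ext_iff] using this

private lemma aux_orbit_finite {Ω : Type u} (G : Subgroup (Equiv.Perm Ω))
    (hfin : ∀ g ∈ G, {x : Ω | g x ≠ x}.Finite) (α : Ω)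
    (hF : {f : Equiv.Perm Ω | f ∈ G ∧ f α = α}.Finite) :
    {β : Ω | ∃ g ∈ G, g α = β}.Finite := by
  classical
  by_contra hO'
  set O := {β : Ω | ∃ g ∈ G, g α = β} with hOdef
  have hO : O.Infinite := hO'
  -- choose an element of G moving α
  have hgex : ∃ g ∈ G, g α ≠ α := by
    by_contra hc
    push_neg at hc
    refine hO (Set.Finite.subset (Set.finite_singleton α) ?_)
    rintro β ⟨g, hgG, rfl⟩
    simp [hc g hgG]
  obtain ⟨g, hgG, hgα⟩ := hgex
  set F := {f : Equiv.Perm Ω | f ∈ G ∧ f α = α} with hFdef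
  have hK : (⋃ f ∈ F, {x : Ω | f x ≠ x}).Finite :=
    Set.Finite.biUnion hF (fun f hf => hfin f hf.1)
  set K := ⋃ f ∈ F, {x : Ω | f x ≠ x} with hKdef
  -- choice of witnesses for orbit elements
  have hchoice : ∀ δ ∈ O, ∃ h ∈ G, h α = δ := fun δ hδ => hδ
  choose! h hhG hhα using hchoice
  set O' := O \ {x : Ω | g x ≠ x} with hO'def
  have hO'inf : O'.Infinite := hO.diff (hfin g hgG)
  have hinvδ : ∀ δ ∈ O, (h δ)⁻¹ δ = α := by
    intro δ hδ
    have h1 := congrArg ⇑(h δ)⁻¹ (hhα δ hδ)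
    rw [show (h δ)⁻¹ ((h δ) α) = α from Equiv.symm_apply_apply (h δ) α] at h1
    exact h1.symm
  -- each (h δ)⁻¹ α lies in the finite set K
  have hx : ∀ δ ∈ O', (h δ)⁻¹ α ∈ K := by
    intro δ hδ
    have hδO : δ ∈ O := hδ.1
    have hδfix : g δ = δ := not_not.1 hδ.2
    set t := (h δ)⁻¹ * g * (h δ) with htdef
    have htG : t ∈ G := G.mul_mem (G.mul_mem (G.inv_mem (hhG δ hδO)) hgG) (hhG δ hδO)
    have htα : t α = α := by
      have : t α = (h δ)⁻¹ (g ((h δ) α)) := rfl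
      rw [this, hhα δ hδO, hδfix, hinvδ δ hδO]
    have hmoves : t ((h δ)⁻¹ α) ≠ (h δ)⁻¹ α := by
      have : t ((h δ)⁻¹ α) = (h δ)⁻¹ (g α) := by
        have : t ((h δ)⁻¹ α) = (h δ)⁻¹ (g ((h δ) ((h δ)⁻¹ α))) := rfl
        rw [this, show (h δ) ((h δ)⁻¹ α) = α from Equiv.apply_symm_apply (h δ) α]
      rw [this]
      intro hcon
      exact hgα ((h δ)⁻¹.injective hcon)
    exact Set.mem_biUnion (show t ∈ F from ⟨htG, htα⟩) hmoves
  -- pigeonhole: some fiber is infinite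
  have hfiber : ∃ x₀ ∈ K, {δ ∈ O' | (h δ)⁻¹ α = x₀}.Infinite := by
    by_contra hc
    push_neg at hc
    apply hO'inf
    have hsub : O' ⊆ ⋃ x ∈ K, {δ ∈ O' | (h δ)⁻¹ α = x} := fun δ hδ =>
      Set.mem_biUnion (hx δ hδ) ⟨hδ, rfl⟩
    exact Set.Finite.subset (Set.Finite.biUnion hK hc) hsub
  obtain ⟨x₀, _, hD⟩ := hfiber
  set D := {δ ∈ O' | (h δ)⁻¹ α = x₀} with hDdef
  obtain ⟨δ₀, hδ₀⟩ := hD.nonempty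
  -- injective map from D into F
  have happly : ∀ δ ∈ D, (h δ * (h δ₀)⁻¹) δ₀ = δ := by
    intro δ hδ
    have : (h δ * (h δ₀)⁻¹) δ₀ = (h δ) ((h δ₀)⁻¹ δ₀) := rfl
    rw [this, hinvδ δ₀ hδ₀.1.1, hhα δ hδ.1.1]
  have hmaps : ∀ δ ∈ D, h δ * (h δ₀)⁻¹ ∈ F := by
    intro δ hδ
    refine ⟨G.mul_mem (hhG δ hδ.1.1) (G.inv_mem (hhG δ₀ hδ₀.1.1)), ?_⟩
    have : (h δ * (h δ₀)⁻¹) α = (h δ) ((h δ₀)⁻¹ α) := rfl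
    rw [this, hδ₀.2, ← hδ.2, show (h δ) ((h δ)⁻¹ α) = α from Equiv.apply_symm_apply (h δ) α]
  have hinj : Set.InjOn (fun δ => h δ * (h δ₀)⁻¹) D := by
    intro a ha b hb hab
    have hab' : h a * (h δ₀)⁻¹ = h b * (h δ₀)⁻¹ := hab
    have : (h a * (h δ₀)⁻¹) δ₀ = (h b * (h δ₀)⁻¹) δ₀ := by rw [hab']
    rwa [happly a ha, happly b hb] at this
  have himg : ((fun δ => h δ * (h δ₀)⁻¹) '' D).Infinite := hD.image hinj
  apply himg
  apply hF.subset
  rintro _ ⟨δ, hδ, rfl⟩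
  exact hmaps δ hδ

private lemma aux_main {Ω : Type u} (I : Finset Ω) :
    ∀ G : Subgroup (Equiv.Perm Ω), (∀ g ∈ G, {x : Ω | g x ≠ x}.Finite) →
      (∀ g ∈ G, (∀ a ∈ I, g a = a) → g = 1) → (G : Set (Equiv.Perm Ω)).Finite := by
  classical
  induction I using Finset.induction_on with
  | empty =>
    intro G _ htriv
    refine Set.Finite.subset (Set.finite_singleton 1) fun g hg => ?_
    simp [htriv g hg (by simp)]
  | @insert α s hα ih =>
    intro G hfin htriv
    set H : Subgroup (Equiv.Perm Ω) := G ⊓ MulAction.stabilizer (Equiv.Perm Ω) α with hHdef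
    have hHmem : ∀ f : Equiv.Perm Ω, f ∈ H ↔ f ∈ G ∧ f α = α := by
      intro f
      rw [hHdef, Subgroup.mem_inf, MulAction.mem_stabilizer_iff]
      rfl
    have hHfin : (H : Set (Equiv.Perm Ω)).Finite := by
      apply ih H (fun g hg => hfin g ((hHmem g).1 hg).1)
      intro g hg hfix
      refine htriv g ((hHmem g).1 hg).1 ?_
      intro a ha
      rcases Finset.mem_insert.1 ha with rfl | ha'
      · exact ((hHmem g).1 hg).2
      · exact hfix a ha'
    have hFfin : {f : Equiv.Perm Ω | f ∈ G ∧ f α = α}.Finite := by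
      apply hHfin.subset
      intro f hf
      exact (hHmem f).2 hf
    have hO := aux_orbit_finite G hfin α hFfin
    have hsub : (G : Set (Equiv.Perm Ω)) ⊆
        ⋃ β ∈ {β : Ω | ∃ g ∈ G, g α = β}, {g : Equiv.Perm Ω | g ∈ G ∧ g α = β} :=
      fun g hg => Set.mem_biUnion ⟨g, hg, rfl⟩ ⟨hg, rfl⟩
    refine Set.Finite.subset (Set.Finite.biUnion hO ?_) hsub
    intro β _
    by_cases hne : {g : Equiv.Perm Ω | g ∈ G ∧ g α = β}.Nonempty
    · obtain ⟨g₀, hg₀G, hg₀α⟩ := hne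
      apply Set.Finite.subset (hFfin.image (fun k => g₀ * k))
      rintro g ⟨hgG, hgα⟩
      refine ⟨g₀⁻¹ * g, ⟨G.mul_mem (G.inv_mem hg₀G) hgG, ?_⟩, by group⟩
      have : (g₀⁻¹ * g) α = g₀⁻¹ (g α) := rfl
      rw [this, hgα, ← hg₀α, show g₀⁻¹ (g₀ α) = α from Equiv.symm_apply_apply g₀ α]
    · rw [Set.not_nonempty_iff_eq_empty] at hne
      rw [hne]
      exact Set.finite_empty

/-- Lemma 11.1: a discrete subgroup of `Sym(Ω)` all of whose
elements move only finitely many points is finite. -/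
theorem stmt17 {Ω : Type u} (G : Subgroup (Equiv.Perm Ω)) (hdisc : FTDiscrete G)
    (hfin : ∀ g ∈ G, {x : Ω | g x ≠ x}.Finite) :
    (G : Set (Equiv.Perm Ω)).Finite := by
  obtain ⟨I, hI⟩ := aux_discrete_sep G hdisc
  exact aux_main I G hfin hI
end
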